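/- arXiv:1904.13133 — 7 statements merged into one kernel-verified Lean document; each statement's English description precedes it below -/
import Mathlib

section
/- Let S be a countable discrete semigroup with identity. (i) If S is amenable, then S satisfies the Følner condition. (ii) If S satisfies the Følner condition, then the semigroup algebra ℂS is algebraically amenable. -/
/-- A finitely additive probability measure on a set `Y`: `μ : 𝒫(Y) → [0,1]` with
`μ(Y) = 1` and `μ(A ∪ B) = μ(A) + μ(B)` for disjoint `A, B`. -/
def IsFinAddProb {Y : Type*} (μ : Set Y → ℝ) : Prop :=
  (∀ A : Set Y, 0 ≤ μ A ∧ μ A ≤ 1) ∧ μ (Set.univ : Set Y) = 1 ∧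
    ∀ A B : Set Y, Disjoint A B → μ (A ∪ B) = μ A + μ B

/-- A semigroup is (left) amenable if it carries a left invariant finitely additive
probability measure, where invariance is `μ(s⁻¹A) = μ(A)` with `s⁻¹A = {t | s * t ∈ A}`. -/
def SemigroupAmenable (S : Type*) [Mul S] : Prop :=
  ∃ μ : Set S → ℝ, IsFinAddProb μ ∧ ∀ (s : S) (A : Set S), μ {t | s * t ∈ A} = μ A

/-- The Følner condition: for every `ε > 0` and finite `𝓕 ⊆ S` there is a finite non-empty
`F ⊆ S` with `|sF ∪ F| ≤ (1+ε)|F|` for all `s ∈ 𝓕`. -/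
def FolnerCondition (S : Type*) [Mul S] : Prop :=
  ∀ ε : ℝ, 0 < ε → ∀ 𝓕 : Finset S, ∃ F : Finset S, F.Nonempty ∧
    ∀ s ∈ 𝓕, ((((fun t => s * t) '' (F : Set S)) ∪ (F : Set S)).ncard : ℝ) ≤ (1 + ε) * F.card

/-- Algebraic amenability of a unital `ℂ`-algebra: for every `ε > 0` and finite `𝓕 ⊆ 𝒜`
there is a non-zero finite dimensional subspace `W` with
`dim (a W + W) ≤ (1+ε) dim W` for all `a ∈ 𝓕`. -/
def AlgebraicallyAmenable (A : Type*) [Ring A] [Algebra ℂ A] : Prop :=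
  ∀ ε : ℝ, 0 < ε → ∀ 𝓕 : Finset A, ∃ W : Submodule ℂ A, W ≠ ⊥ ∧ FiniteDimensional ℂ ↥W ∧
    ∀ a ∈ 𝓕, (Module.finrank ℂ ↥(W.map (LinearMap.mulLeft ℂ a) ⊔ W) : ℝ)
      ≤ (1 + ε) * (Module.finrank ℂ ↥W : ℝ)


section Helpers

lemma mu_empty {Y : Type*} {μ : Set Y → ℝ} (hμ : IsFinAddProb μ) : μ ∅ = 0 := by
  have := hμ.2.2 ∅ ∅ (disjoint_bot_left)
  simp at this
  linarith

lemma mu_iUnion {Y : Type*} {μ : Set Y → ℝ} (hμ : IsFinAddProb μ) {ι : Type*}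
    [DecidableEq ι] (I : Finset ι) (E : ι → Set Y)
    (hdisj : ∀ i ∈ I, ∀ j ∈ I, i ≠ j → Disjoint (E i) (E j)) :
    μ (⋃ i ∈ I, E i) = ∑ i ∈ I, μ (E i) := by
  induction I using Finset.induction with
  | empty => simpa using mu_empty hμ
  | @insert a s ha ih =>
      rw [Finset.set_biUnion_insert, Finset.sum_insert ha,
        hμ.2.2 _ _ ?_, ih ?_]
      · intro i hi j hj hij
        exact hdisj i (Finset.mem_insert_of_mem hi) j (Finset.mem_insert_of_mem hj) hij
      · refine Set.disjoint_iUnion₂_right.2 fun i hi => ?_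
        exact hdisj a (Finset.mem_insert_self a s) i (Finset.mem_insert_of_mem hi)
          (fun h => ha (h ▸ hi))

lemma key_lemma {Y : Type*} {μ : Set Y → ℝ} (hμ : IsFinAddProb μ) {ι : Type*}
    [DecidableEq ι] (I : Finset ι) (A : ι → Set Y) (c : ι → ℝ) (v : ℝ)
    (h : ∀ t : Y, v ≤ ∑ j ∈ I, (A j).indicator (fun _ => c j) t) :
    v ≤ ∑ j ∈ I, c j * μ (A j) := by
  classical
  set Atom : Finset ι → Set Y := fun σ => {t | ∀ j ∈ I, (t ∈ A j ↔ j ∈ σ)} with hAtom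
  have hmem : ∀ (t : Y), ∀ σ ∈ I.powerset, (t ∈ Atom σ ↔ σ = I.filter (fun j => t ∈ A j)) := by
    intro t σ hσ
    rw [Finset.mem_powerset] at hσ
    constructor
    · intro ht
      ext j
      rw [Finset.mem_filter]
      constructor
      · intro hj; exact ⟨hσ hj, (ht j (hσ hj)).2 hj⟩
      · rintro ⟨hjI, hjA⟩; exact (ht j hjI).1 hjA
    · rintro rfl j hj
      simp [Finset.mem_filter, hj]
  have hdisj : ∀ σ ∈ I.powerset, ∀ τ ∈ I.powerset, σ ≠ τ → Disjoint (Atom σ) (Atom τ) := by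
    intro σ hσ τ hτ hne
    rw [Set.disjoint_left]
    intro t htσ htτ
    exact hne (((hmem t σ hσ).1 htσ).trans ((hmem t τ hτ).1 htτ).symm)
  have hcover : (⋃ σ ∈ I.powerset, Atom σ) = Set.univ := by
    ext t
    simp only [Set.mem_iUnion, Set.mem_univ, iff_true]
    refine ⟨I.filter (fun j => t ∈ A j), Finset.mem_powerset.2 (Finset.filter_subset _ _), ?_⟩
    exact (hmem t _ (Finset.mem_powerset.2 (Finset.filter_subset _ _))).2 rfl
  have hsum1 : ∑ σ ∈ I.powerset, μ (Atom σ) = 1 := by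
    rw [← mu_iUnion hμ _ _ hdisj, hcover, hμ.2.1]
  have hAeq : ∀ j ∈ I, μ (A j) = ∑ σ ∈ I.powerset, (if j ∈ σ then μ (Atom σ) else 0) := by
    intro j hj
    have hset : A j = ⋃ σ ∈ I.powerset.filter (fun σ => j ∈ σ), Atom σ := by
      ext t
      simp only [Set.mem_iUnion, Finset.mem_filter]
      constructor
      · intro ht
        refine ⟨I.filter (fun j => t ∈ A j), ⟨Finset.mem_powerset.2 (Finset.filter_subset _ _),
          Finset.mem_filter.2 ⟨hj, ht⟩⟩, ?_⟩
        exact (hmem t _ (Finset.mem_powerset.2 (Finset.filter_subset _ _))).2 rfl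
      · rintro ⟨σ, ⟨hσ, hjσ⟩, htσ⟩
        exact (htσ j hj).2 hjσ
    rw [hset, mu_iUnion hμ _ _ (fun i hi k hk hik =>
      hdisj i (Finset.mem_filter.1 hi).1 k (Finset.mem_filter.1 hk).1 hik),
      Finset.sum_filter]
  calc v = v * ∑ σ ∈ I.powerset, μ (Atom σ) := by rw [hsum1, mul_one]
    _ = ∑ σ ∈ I.powerset, v * μ (Atom σ) := Finset.mul_sum _ _ _
    _ ≤ ∑ σ ∈ I.powerset, (∑ j ∈ σ, c j) * μ (Atom σ) := by
        refine Finset.sum_le_sum fun σ hσ => ?_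
        rcases Set.eq_empty_or_nonempty (Atom σ) with he | ⟨t, ht⟩
        · rw [he, mu_empty hμ, mul_zero, mul_zero]
        · refine mul_le_mul_of_nonneg_right ?_ (hμ.1 _).1
          have hσt : σ = I.filter (fun j => t ∈ A j) := (hmem t σ hσ).1 ht
          calc v ≤ ∑ j ∈ I, (A j).indicator (fun _ => c j) t := h t
            _ = ∑ j ∈ σ, c j := by
                rw [hσt, Finset.sum_filter]
                exact Finset.sum_congr rfl fun j hj => by
                  rw [Set.indicator_apply]
    _ = ∑ σ ∈ I.powerset, ∑ j ∈ I, (if j ∈ σ then c j * μ (Atom σ) else 0) := by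
        refine Finset.sum_congr rfl fun σ hσ => ?_
        rw [Finset.sum_ite_mem, Finset.sum_mul]
        congr 1
        rw [Finset.inter_comm, Finset.inter_eq_left.2 (Finset.mem_powerset.1 hσ)]
    _ = ∑ j ∈ I, c j * μ (A j) := by
        rw [Finset.sum_comm]
        refine Finset.sum_congr rfl fun j hj => ?_
        rw [hAeq j hj, Finset.mul_sum]
        refine Finset.sum_congr rfl fun σ hσ => ?_
        split <;> simp

open Finset

lemma sum_maxzero_le {m : ℕ} {d : ℕ → ℝ}
    (h : (∀ k < m, 0 ≤ d k) ∨ (∀ k < m, d k ≤ 0)) :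
    ∑ k ∈ Finset.range m, max (d k) 0 ≤ max (∑ k ∈ Finset.range m, d k) 0 := by
  rcases h with h | h
  · have he : ∀ k ∈ Finset.range m, max (d k) 0 = d k :=
      fun k hk => max_eq_left (h k (Finset.mem_range.1 hk))
    rw [Finset.sum_congr rfl he]
    exact le_max_left _ _
  · have he : ∀ k ∈ Finset.range m, max (d k) 0 = 0 :=
      fun k hk => max_eq_right (h k (Finset.mem_range.1 hk))
    rw [Finset.sum_congr rfl he, Finset.sum_const, smul_zero]
    exact le_max_right _ _

section Chain
variable {S : Type*} [Monoid S] [DecidableEq S]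

/-- convolution of `f` (supported in `T`) by point mass at `s`. -/
noncomputable def conv (s : S) (f : S → ℝ) (T : Finset S) (x : S) : ℝ :=
  ∑ t ∈ T.filter (fun t => s * t = x), f t

lemma decompose (n : ℕ) : ∀ (T : Finset S) (f : S → ℝ),
    (T.filter (fun x => f x ≠ 0)).card ≤ n → (∀ x, 0 ≤ f x) → (∀ x ∉ T, f x = 0) →
    ∃ (m : ℕ) (F : ℕ → Finset S) (c : ℕ → ℝ),
      (∀ k, F (k+1) ⊆ F k) ∧ (∀ k < m, 0 < c k) ∧ (F 0 ⊆ T) ∧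
      (∀ x, f x = ∑ k ∈ Finset.range m, c k * (if x ∈ F k then 1 else 0)) := by
  induction n with
  | zero =>
      intro T f hcard hpos hsupp
      refine ⟨0, fun _ => ∅, fun _ => 0, fun k => le_refl _, by simp, by simp, fun x => ?_⟩
      simp only [Finset.range_zero, Finset.sum_empty]
      by_cases hx : x ∈ T
      · by_contra hne
        have : x ∈ T.filter (fun x => f x ≠ 0) := Finset.mem_filter.2 ⟨hx, hne⟩
        have := Finset.card_pos.2 ⟨x, this⟩
        omega
      · exact hsupp x hx
  | succ n ih =>
      intro T f hcard hpos hsupp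
      set supp := T.filter (fun x => f x ≠ 0) with hsuppdef
      rcases Finset.eq_empty_or_nonempty supp with he | hne
      · refine ⟨0, fun _ => ∅, fun _ => 0, fun k => le_refl _, by simp, by simp, fun x => ?_⟩
        simp only [Finset.range_zero, Finset.sum_empty]
        by_cases hx : x ∈ T
        · by_contra hne'
          have : x ∈ supp := Finset.mem_filter.2 ⟨hx, hne'⟩
          simp [he] at this
        · exact hsupp x hx
      · have hne' : (supp.image f).Nonempty := hne.image f
        set c0 := (supp.image f).min' hne' with hc0def
        obtain ⟨t0, ht0supp, ht0⟩ := Finset.mem_image.1 ((supp.image f).min'_mem hne')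
        have hc0pos : 0 < c0 := by
          rcases lt_or_eq_of_le (hpos t0) with h | h
          · rw [hc0def, ← ht0]; exact h
          · exact absurd h.symm (Finset.mem_filter.1 ht0supp).2
        have hc0le : ∀ x ∈ supp, c0 ≤ f x := fun x hx =>
          Finset.min'_le _ _ (Finset.mem_image_of_mem f hx)
        set f' : S → ℝ := fun x => f x - (if x ∈ supp then c0 else 0) with hf'
        have hpos' : ∀ x, 0 ≤ f' x := by
          intro x; rw [hf']; dsimp only
          split
          · rename_i hx; linarith [hc0le x hx]
          · simpa using hpos x
        have hsupp' : ∀ x ∉ supp, f' x = 0 := by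
          intro x hx; rw [hf']; dsimp only
          rw [if_neg hx, sub_zero]
          by_cases hxT : x ∈ T
          · by_contra hne'
            exact hx (Finset.mem_filter.2 ⟨hxT, hne'⟩)
          · exact hsupp x hxT
        have ht0' : f' t0 = 0 := by
          rw [hf']; dsimp only; rw [if_pos ht0supp, ht0, sub_self]
        have hcard' : (supp.filter (fun x => f' x ≠ 0)).card ≤ n := by
          have hsubset : supp.filter (fun x => f' x ≠ 0) ⊆ supp.erase t0 := by
            intro x hx
            rw [Finset.mem_filter] at hx
            refine Finset.mem_erase.2 ⟨?_, hx.1⟩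
            rintro rfl; exact hx.2 ht0'
          calc (supp.filter (fun x => f' x ≠ 0)).card ≤ (supp.erase t0).card :=
                Finset.card_le_card hsubset
            _ = supp.card - 1 := Finset.card_erase_of_mem ht0supp
            _ ≤ n := by
                have h1 : 1 ≤ supp.card := Finset.card_pos.2 hne
                omega
        obtain ⟨m, F, c, hchain, hcpos, hF0, hrep⟩ := ih supp f' hcard' hpos' hsupp'
        refine ⟨m + 1, fun k => Nat.rec supp (fun k _ => F k) k,
          fun k => Nat.rec c0 (fun k _ => c k) k, ?_, ?_, ?_, ?_⟩
        · intro k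
          cases k with
          | zero =>
              show F 0 ⊆ supp
              exact hF0
          | succ k => exact hchain k
        · intro k hk
          cases k with
          | zero => exact hc0pos
          | succ k => exact hcpos k (by omega)
        · exact Finset.filter_subset _ _
        · intro x
          rw [Finset.sum_range_succ']
          have : f x = c0 * (if x ∈ supp then 1 else 0) + f' x := by
            rw [hf']; dsimp only; split <;> ring
          rw [this, hrep x, add_comm]
          rfl

lemma chain_subset_zero {F : ℕ → Finset S} (hchain : ∀ k, F (k+1) ⊆ F k) :
    ∀ k, F k ⊆ F 0 := by
  intro k
  induction k with
  | zero => exact Finset.Subset.refl _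
  | succ k ih => exact (hchain k).trans ih

lemma chain_mono {F : ℕ → Finset S} (hchain : ∀ k, F (k+1) ⊆ F k) :
    ∀ j k, j ≤ k → F k ⊆ F j := by
  intro j k hjk
  induction k with
  | zero => rw [Nat.le_zero.1 hjk]
  | succ k ih =>
      rcases Nat.lt_or_ge j (k+1) with h | h
      · exact (hchain k).trans (ih (by omega))
      · have : j = k + 1 := by omega
        rw [this]
end Chain

section ChainIneq
variable {S : Type*} [Monoid S] [DecidableEq S]

lemma chain_ineq (𝓕 : Finset S) (ε : ℝ)
    (hfail : ∀ F : Finset S, F.Nonempty →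
      ∃ s ∈ 𝓕, ε * F.card ≤ ((F.image (fun t => s * t) \ F).card : ℝ))
    (m : ℕ) (F : ℕ → Finset S) (c : ℕ → ℝ)
    (hchain : ∀ k, F (k+1) ⊆ F k) (hc : ∀ k < m, 0 < c k)
    (T : Finset S) (hFT : F 0 ⊆ T)
    (f : S → ℝ) (hf : ∀ x, f x = ∑ k ∈ Finset.range m, c k * (if x ∈ F k then 1 else 0))
    (T' : Finset S) (hT' : ∀ s ∈ 𝓕, ∀ x ∈ F 0, x ∈ T' ∧ s * x ∈ T') :
    ε * ∑ k ∈ Finset.range m, c k * ((F k).card : ℝ) ≤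
      ∑ s ∈ 𝓕, ∑ x ∈ T', max (conv s f T x - f x) 0 := by
  have hpoint : ∀ s ∈ 𝓕, ∀ x ∈ T',
      ∑ k ∈ Finset.range m, c k *
        (if x ∈ (F k).image (fun t => s * t) ∧ x ∉ F k then 1 else 0)
      ≤ max (conv s f T x - f x) 0 := by
    intro s hs x _
    set a : ℕ → ℝ := fun k => if x ∈ (F k).image (fun t => s * t) then 1 else 0 with ha
    set b : ℕ → ℝ := fun k => if x ∈ F k then 1 else 0 with hb
    set d : ℕ → ℝ := fun k => c k * (a k - b k) with hd
    have hconv : ∑ k ∈ Finset.range m, c k * a k ≤ conv s f T x := by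
      have hconveq : conv s f T x = ∑ k ∈ Finset.range m,
          c k * (((T.filter (fun t => s * t = x)).filter (fun t => t ∈ F k)).card : ℝ) := by
        unfold conv
        rw [Finset.sum_congr rfl (fun t _ => hf t), Finset.sum_comm]
        refine Finset.sum_congr rfl fun k _ => ?_
        rw [← Finset.mul_sum]
        congr 1
        rw [Finset.sum_boole]
      rw [hconveq]
      refine Finset.sum_le_sum fun k hk => ?_
      refine mul_le_mul_of_nonneg_left ?_ (le_of_lt (hc k (Finset.mem_range.1 hk)))
      rw [ha]
      dsimp only
      split
      · rename_i hmem
        obtain ⟨t, htF, hteq⟩ := Finset.mem_image.1 hmem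
        have htT : t ∈ T := hFT (chain_subset_zero hchain k htF)
        have : t ∈ (T.filter (fun t => s * t = x)).filter (fun t => t ∈ F k) :=
          Finset.mem_filter.2 ⟨Finset.mem_filter.2 ⟨htT, hteq⟩, htF⟩
        have h1 : 1 ≤ ((T.filter (fun t => s * t = x)).filter (fun t => t ∈ F k)).card :=
          Finset.card_pos.2 ⟨t, this⟩
        exact_mod_cast h1
      · exact Nat.cast_nonneg _
    have hsumd : ∑ k ∈ Finset.range m, d k ≤ conv s f T x - f x := by
      rw [hf x]
      have : ∑ k ∈ Finset.range m, d k
          = ∑ k ∈ Finset.range m, c k * a k - ∑ k ∈ Finset.range m, c k * b k := by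
        rw [← Finset.sum_sub_distrib]
        exact Finset.sum_congr rfl fun k _ => by rw [hd]; ring
      rw [this]
      have : ∑ k ∈ Finset.range m, c k * b k
          = ∑ k ∈ Finset.range m, c k * (if x ∈ F k then 1 else 0) := rfl
      linarith [hconv]
    have hcomp : (∀ k < m, 0 ≤ d k) ∨ (∀ k < m, d k ≤ 0) := by
      by_cases hex : ∃ k, k < m ∧ x ∈ F k ∧ x ∉ (F k).image (fun t => s * t)
      · right
        obtain ⟨k0, hk0, hxF, hxI⟩ := hex
        intro k hk
        rw [hd]
        dsimp only
        have hab : a k ≤ b k := by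
          rw [ha, hb]; dsimp only
          by_cases h1 : x ∈ (F k).image (fun t => s * t)
          · have hxFk : x ∈ F k := by
              rcases le_or_gt k k0 with h | h
              · exact chain_mono hchain k k0 h hxF
              · exfalso
                refine hxI ?_
                obtain ⟨t, htF, hteq⟩ := Finset.mem_image.1 h1
                exact Finset.mem_image.2 ⟨t, chain_mono hchain k0 k (le_of_lt h) htF, hteq⟩
            simp [h1, hxFk]
          · by_cases h2 : x ∈ F k <;> simp [h1, h2]
        have := le_of_lt (hc k hk)
        nlinarith
      · left
        intro k hk
        rw [hd]
        dsimp only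
        have hab : b k ≤ a k := by
          rw [ha, hb]; dsimp only
          by_cases h2 : x ∈ F k
          · by_cases h1 : x ∈ (F k).image (fun t => s * t)
            · simp [h1, h2]
            · exact absurd ⟨k, hk, h2, h1⟩ hex
          · by_cases h1 : x ∈ (F k).image (fun t => s * t) <;> simp [h1, h2]
        have := le_of_lt (hc k hk)
        nlinarith
    calc ∑ k ∈ Finset.range m, c k *
          (if x ∈ (F k).image (fun t => s * t) ∧ x ∉ F k then 1 else 0)
        = ∑ k ∈ Finset.range m, max (d k) 0 := by
          refine Finset.sum_congr rfl fun k hk => ?_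
          have hck := hc k (Finset.mem_range.1 hk)
          rw [hd, ha, hb]
          dsimp only
          by_cases h1 : x ∈ (F k).image (fun t => s * t) <;> by_cases h2 : x ∈ F k
          · rw [if_neg (by tauto), if_pos h1, if_pos h2]
            norm_num
          · rw [if_pos ⟨h1, h2⟩, if_pos h1, if_neg h2, max_eq_left (by linarith)]
            ring
          · rw [if_neg (by tauto), if_neg h1, if_pos h2, max_eq_right (by linarith)]
            ring
          · rw [if_neg (by tauto), if_neg h1, if_neg h2]
            norm_num
      _ ≤ max (∑ k ∈ Finset.range m, d k) 0 := sum_maxzero_le hcomp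
      _ ≤ max (conv s f T x - f x) 0 := max_le_max hsumd (le_refl 0)
  have hinner : ∀ s ∈ 𝓕,
      ∑ k ∈ Finset.range m, c k * (((F k).image (fun t => s * t) \ F k).card : ℝ)
      ≤ ∑ x ∈ T', max (conv s f T x - f x) 0 := by
    intro s hs
    have hswap : ∑ x ∈ T', ∑ k ∈ Finset.range m, c k *
        (if x ∈ (F k).image (fun t => s * t) ∧ x ∉ F k then 1 else 0)
        = ∑ k ∈ Finset.range m, c k * (((F k).image (fun t => s * t) \ F k).card : ℝ) := by
      rw [Finset.sum_comm]
      refine Finset.sum_congr rfl fun k _ => ?_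
      rw [← Finset.mul_sum]
      congr 1
      have : ∀ x, (x ∈ (F k).image (fun t => s * t) ∧ x ∉ F k)
          ↔ x ∈ (F k).image (fun t => s * t) \ F k := by
        intro x; rw [Finset.mem_sdiff]
      rw [Finset.sum_congr rfl (fun x _ => by rw [if_congr (this x) rfl rfl]), Finset.sum_boole]
      congr 1
      rw [Finset.filter_mem_eq_inter, Finset.inter_eq_right.2 ?_]
      intro x hx
      obtain ⟨t, htF, hteq⟩ := Finset.mem_image.1 (Finset.mem_sdiff.1 hx).1
      rw [← hteq]
      exact (hT' s hs t (chain_subset_zero hchain k htF)).2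
    rw [← hswap]
    exact Finset.sum_le_sum fun x hx => hpoint s hs x hx
  calc ε * ∑ k ∈ Finset.range m, c k * ((F k).card : ℝ)
      = ∑ k ∈ Finset.range m, c k * (ε * ((F k).card : ℝ)) := by
        rw [Finset.mul_sum]; exact Finset.sum_congr rfl fun k _ => by ring
    _ ≤ ∑ k ∈ Finset.range m, c k *
          (∑ s ∈ 𝓕, (((F k).image (fun t => s * t) \ F k).card : ℝ)) := by
        refine Finset.sum_le_sum fun k hk => ?_
        refine mul_le_mul_of_nonneg_left ?_ (le_of_lt (hc k (Finset.mem_range.1 hk)))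
        rcases Finset.eq_empty_or_nonempty (F k) with he | hne
        · rw [he]
          simp only [Finset.card_empty, Nat.cast_zero, mul_zero]
          exact Finset.sum_nonneg fun s _ => Nat.cast_nonneg _
        · obtain ⟨s0, hs0, hs0le⟩ := hfail (F k) hne
          calc ε * ((F k).card : ℝ) ≤ (((F k).image (fun t => s0 * t) \ F k).card : ℝ) := hs0le
            _ ≤ ∑ s ∈ 𝓕, (((F k).image (fun t => s * t) \ F k).card : ℝ) :=
                Finset.single_le_sum (f := fun s => (((F k).image (fun t => s * t) \ F k).card : ℝ))
                  (fun s _ => Nat.cast_nonneg _) hs0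
    _ = ∑ s ∈ 𝓕, ∑ k ∈ Finset.range m, c k * (((F k).image (fun t => s * t) \ F k).card : ℝ) := by
        rw [Finset.sum_comm]
        refine Finset.sum_congr rfl fun k _ => ?_
        rw [← Finset.mul_sum]
    _ ≤ ∑ s ∈ 𝓕, ∑ x ∈ T', max (conv s f T x - f x) 0 :=
        Finset.sum_le_sum fun s hs => hinner s hs
end ChainIneq

section StepA
variable {S : Type*} [Monoid S] [DecidableEq S]

noncomputable def bigT (𝓕 T : Finset S) : Finset S :=
  T ∪ 𝓕.biUnion (fun s => T.image (fun t => s * t))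

lemma stepA (𝓕 : Finset S) (ε : ℝ)
    (hfail : ∀ F : Finset S, F.Nonempty →
      ∃ s ∈ 𝓕, ε * F.card ≤ ((F.image (fun t => s * t) \ F).card : ℝ))
    (T : Finset S) (f : S → ℝ)
    (hpos : ∀ x, 0 ≤ f x) (hsupp : ∀ x ∉ T, f x = 0) (hsum : ∑ x ∈ T, f x = 1) :
    ε ≤ ∑ s ∈ 𝓕, ∑ x ∈ bigT 𝓕 T, max (conv s f T x - f x) 0 := by
  obtain ⟨m, F, c, hchain, hc, hF0, hrep⟩ :=
    decompose (T.filter (fun x => f x ≠ 0)).card T f le_rfl hpos hsupp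
  have hFT : ∀ k, F k ⊆ T := fun k => (chain_subset_zero hchain k).trans hF0
  have hsum' : ∑ k ∈ Finset.range m, c k * ((F k).card : ℝ) = 1 := by
    rw [← hsum]
    calc ∑ k ∈ Finset.range m, c k * ((F k).card : ℝ)
        = ∑ k ∈ Finset.range m, c k * ∑ x ∈ T, (if x ∈ F k then (1:ℝ) else 0) := by
          refine Finset.sum_congr rfl fun k _ => ?_
          congr 1
          rw [Finset.sum_boole]
          congr 1
          rw [Finset.filter_mem_eq_inter, Finset.inter_eq_right.2 (hFT k)]
      _ = ∑ x ∈ T, ∑ k ∈ Finset.range m, c k * (if x ∈ F k then (1:ℝ) else 0) := by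
          rw [Finset.sum_comm]
          exact Finset.sum_congr rfl fun k _ => Finset.mul_sum _ _ _
      _ = ∑ x ∈ T, f x := Finset.sum_congr rfl fun x _ => (hrep x).symm
  have hT' : ∀ s ∈ 𝓕, ∀ x ∈ F 0, x ∈ bigT 𝓕 T ∧ s * x ∈ bigT 𝓕 T := by
    intro s hs x hx
    have hxT : x ∈ T := hF0 hx
    constructor
    · exact Finset.mem_union_left _ hxT
    · exact Finset.mem_union_right _ (Finset.mem_biUnion.2
        ⟨s, hs, Finset.mem_image.2 ⟨x, hxT, rfl⟩⟩)
  have := chain_ineq 𝓕 ε hfail m F c hchain hc T hF0 f hrep (bigT 𝓕 T) hT'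
  rwa [hsum', mul_one] at this
end StepA

section Step2
variable {S : Type*} [Monoid S] [DecidableEq S]

lemma step2 (𝓕 : Finset S) (ε : ℝ) (hε : 0 < ε)
    (hA : ∀ (T : Finset S) (f : S → ℝ), (∀ x, 0 ≤ f x) → (∀ x ∉ T, f x = 0) →
      (∑ x ∈ T, f x) = 1 →
      ε ≤ ∑ s ∈ 𝓕, ∑ x ∈ bigT 𝓕 T, max (conv s f T x - f x) 0)
    (T : Finset S) (hT : T.Nonempty) :
    ∃ θ : S → S → ℝ, (∀ s x, θ s x ∈ Set.Icc (0:ℝ) 1) ∧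
      ∀ t ∈ T, ε/2 ≤ ∑ s ∈ 𝓕, (θ s (s * t) - θ s t) := by
  classical
  set K : Set (↥T → ℝ) := {x | ∃ θ : S → S → ℝ, (∀ s y, θ s y ∈ Set.Icc (0:ℝ) 1) ∧
    x = fun t : ↥T => ∑ s ∈ 𝓕, (θ s (s * (t:S)) - θ s (t:S))} with hKdef
  set Q : Set (↥T → ℝ) := {x | ∀ t, ε/2 < x t} with hQdef
  by_cases hinter : (K ∩ Q).Nonempty
  · obtain ⟨x, ⟨θ, hθ, rfl⟩, hxQ⟩ := hinter
    exact ⟨θ, hθ, fun t ht => le_of_lt (hxQ ⟨t, ht⟩)⟩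
  exfalso
  have hdisj : Disjoint Q K := by
    rw [Set.disjoint_iff_inter_eq_empty, Set.inter_comm]
    exact Set.not_nonempty_iff_eq_empty.1 hinter
  have hQconv : Convex ℝ Q := by
    intro x hx y hy a b ha hb hab
    intro t
    rcases lt_or_eq_of_le ha with ha' | ha'
    · have h1 : a * (ε/2) < a * x t := by exact (mul_lt_mul_iff_right₀ ha').2 (hx t)
      have h2 : b * (ε/2) ≤ b * y t := mul_le_mul_of_nonneg_left (le_of_lt (hy t)) hb
      have : a * (ε/2) + b * (ε/2) = ε/2 := by rw [← add_mul, hab, one_mul]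
      simp only [Pi.add_apply, Pi.smul_apply, smul_eq_mul]
      linarith
    · have hb' : b = 1 := by linarith
      rw [← ha', hb']
      simp only [Pi.add_apply, Pi.smul_apply, smul_eq_mul]
      have := hy t
      linarith
  have hQopen : IsOpen Q := by
    have : Q = ⋂ t : ↥T, (fun x : ↥T → ℝ => x t) ⁻¹' Set.Ioi (ε/2) := by
      ext x; simp [hQdef, Set.mem_iInter, Set.mem_Ioi]
    rw [this]
    exact isOpen_iInter_of_finite fun t => (isOpen_Ioi).preimage (continuous_apply t)
  have hKconv : Convex ℝ K := by
    rintro x ⟨θ1, hθ1, rfl⟩ y ⟨θ2, hθ2, rfl⟩ a b ha hb hab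
    refine ⟨fun s y => a * θ1 s y + b * θ2 s y, ?_, ?_⟩
    · intro s y
      constructor
      · show (0:ℝ) ≤ a * θ1 s y + b * θ2 s y
        have := (hθ1 s y).1; have := (hθ2 s y).1; positivity
      · show a * θ1 s y + b * θ2 s y ≤ 1
        have h1 : a * θ1 s y ≤ a * 1 := mul_le_mul_of_nonneg_left (hθ1 s y).2 ha
        have h2 : b * θ2 s y ≤ b * 1 := mul_le_mul_of_nonneg_left (hθ2 s y).2 hb
        have : a * 1 + b * 1 = 1 := by rw [mul_one, mul_one, hab]
        linarith
    · funext t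
      simp only [Pi.add_apply, Pi.smul_apply, smul_eq_mul]
      rw [Finset.mul_sum, Finset.mul_sum, ← Finset.sum_add_distrib]
      exact Finset.sum_congr rfl fun s _ => by ring
  obtain ⟨φ, u, hφQ, hφK⟩ := geometric_hahn_banach_open hQconv hQopen hKconv hdisj
  set c : ↥T → ℝ := fun t => -φ (Pi.single t 1) with hcdef
  have hrep : ∀ x : ↥T → ℝ, φ x = ∑ t, x t * φ (Pi.single t 1) := by
    intro x
    conv_lhs => rw [← Finset.univ_sum_single x]
    rw [map_sum]
    refine Finset.sum_congr rfl fun t _ => ?_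
    have : (Pi.single t (x t) : ↥T → ℝ) = x t • (Pi.single t (1:ℝ) : ↥T → ℝ) := by
      rw [← Pi.single_smul, smul_eq_mul, mul_one]
    rw [this, map_smul, smul_eq_mul]
  have hK0 : (0 : ↥T → ℝ) ∈ K := by
    refine ⟨fun _ _ => 0, fun s y => ⟨le_refl _, zero_le_one⟩, ?_⟩
    funext t; simp
  have hu0 : u ≤ 0 := by simpa using hφK 0 hK0
  have hq0Q : ∀ η : ℝ, 0 < η → (fun _ : ↥T => ε/2 + η) ∈ Q := fun η hη t => by
    simp only [hQdef, Set.mem_setOf_eq]; linarith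
  have hc0 : ∀ t, 0 ≤ c t := by
    intro t
    by_contra hneg
    push_neg at hneg
    set e : ↥T → ℝ := Pi.single t 1 with hedef
    have hφe : 0 < φ e := by
      rw [hcdef] at hneg; dsimp only at hneg; rw [hedef]; linarith
    set q0 : ↥T → ℝ := fun _ => ε/2 + 1 with hq0def
    have hq0 : ∀ lam : ℝ, 0 ≤ lam → (q0 + lam • e) ∈ Q := by
      intro lam hlam r
      have he : (0:ℝ) ≤ e r := by
        rw [hedef]
        rcases eq_or_ne r t with rfl | h
        · simp
        · rw [Pi.single_apply, if_neg h]
      show ε/2 < (q0 + lam • e) r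
      have heq : (q0 + lam • e) r = ε/2 + 1 + lam * e r := by
        simp only [Pi.add_apply, Pi.smul_apply, smul_eq_mul, hq0def]
      rw [heq]
      nlinarith
    set lam := max 0 ((u - φ q0)/φ e) with hlam
    have h1 := hφQ _ (hq0 lam (le_max_left _ _))
    rw [map_add, map_smul, smul_eq_mul] at h1
    have h2 : u - φ q0 ≤ lam * φ e := by
      rcases le_or_gt (u - φ q0) 0 with h | h
      · have : 0 ≤ lam * φ e := mul_nonneg (le_max_left _ _) (le_of_lt hφe)
        linarith
      · have hle : lam = (u - φ q0)/φ e :=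
          max_eq_right (le_of_lt (div_pos h hφe))
        rw [hle, div_mul_cancel₀ _ (ne_of_gt hφe)]
    linarith
  set Sc : ℝ := ∑ t, c t with hScdef
  have hScnn : 0 ≤ Sc := Finset.sum_nonneg fun t _ => hc0 t
  have hScpos : 0 < Sc := by
    rcases lt_or_eq_of_le hScnn with h | h
    · exact h
    exfalso
    have hcall : ∀ t, c t = 0 := fun t =>
      (Finset.sum_eq_zero_iff_of_nonneg (fun t _ => hc0 t)).1 h.symm t (Finset.mem_univ t)
    have hphi0 : ∀ x : ↥T → ℝ, φ x = 0 := by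
      intro x
      rw [hrep]
      refine Finset.sum_eq_zero fun t _ => ?_
      have h2 : φ (Pi.single t 1) = -c t := by rw [hcdef]; ring
      rw [h2, hcall t, neg_zero, mul_zero]
    have h3 := hφQ _ (hq0Q 1 one_pos)
    rw [hphi0] at h3
    have h4 := hφK 0 hK0
    rw [map_zero] at h4
    linarith
  have hKbound : ∀ x ∈ K, ∑ t, c t * x t ≤ -u := by
    intro x hx
    have h1 := hφK x hx
    rw [hrep] at h1
    have h2 : ∑ t, x t * φ (Pi.single t 1) = -∑ t, c t * x t := by
      rw [← Finset.sum_neg_distrib]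
      refine Finset.sum_congr rfl fun t _ => ?_
      have : φ (Pi.single t 1) = -c t := by rw [hcdef]; ring
      rw [this]; ring
    rw [h2] at h1
    linarith
  have hubound : -u ≤ (ε/2) * Sc := by
    by_contra hcon2
    push_neg at hcon2
    set η := (-u - (ε/2) * Sc)/Sc with hηdef
    have hηpos : 0 < η := div_pos (by linarith) hScpos
    have h1 := hφQ _ (hq0Q η hηpos)
    rw [hrep] at h1
    have h2 : ∑ t, (fun _ : ↥T => ε/2 + η) t * φ (Pi.single t 1) = -((ε/2 + η) * Sc) := by
      rw [hScdef, Finset.mul_sum, ← Finset.sum_neg_distrib]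
      refine Finset.sum_congr rfl fun t _ => ?_
      have : φ (Pi.single t 1) = -c t := by rw [hcdef]; ring
      rw [this]; ring
    rw [h2] at h1
    have h3 : η * Sc = -u - (ε/2) * Sc := by
      rw [hηdef, div_mul_cancel₀ _ (ne_of_gt hScpos)]
    nlinarith
  -- build the probability density from c
  set f : S → ℝ := fun y => if h : y ∈ T then c ⟨y, h⟩ / Sc else 0 with hfdef
  have hfpos : ∀ x, 0 ≤ f x := by
    intro x
    rw [hfdef]
    dsimp only
    split
    · exact div_nonneg (hc0 _) (le_of_lt hScpos)
    · exact le_refl 0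
  have hfsupp : ∀ x ∉ T, f x = 0 := by
    intro x hx
    rw [hfdef]
    exact dif_neg hx
  have hfT : ∀ t : ↥T, f ↑t = c t / Sc := by
    intro t
    rw [hfdef]
    dsimp only
    rw [dif_pos t.2]
  have hfsum : ∑ x ∈ T, f x = 1 := by
    rw [← Finset.sum_attach T f]
    rw [show ∑ x ∈ T.attach, f ↑x = ∑ x ∈ T.attach, c x / Sc from
      Finset.sum_congr rfl fun x _ => hfT x]
    rw [← Finset.sum_div, ← Finset.univ_eq_attach, ← hScdef, div_self (ne_of_gt hScpos)]
  have hAf := hA T f hfpos hfsupp hfsum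
  set θh : S → S → ℝ := fun s x => if 0 < conv s f T x - f x then 1 else 0 with hθhdef
  have hθhI : ∀ s x, θh s x ∈ Set.Icc (0:ℝ) 1 := by
    intro s x
    rw [hθhdef]
    dsimp only
    split
    · exact ⟨zero_le_one, le_refl 1⟩
    · exact ⟨le_refl 0, zero_le_one⟩
  have hmax : ∀ s x, max (conv s f T x - f x) 0 = θh s x * (conv s f T x - f x) := by
    intro s x
    rw [hθhdef]
    dsimp only
    split
    · rename_i h
      rw [max_eq_left (le_of_lt h), one_mul]
    · rename_i h
      rw [max_eq_right (by linarith [not_lt.1 h]), zero_mul]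
  have hfiber : ∀ s ∈ 𝓕, ∑ x ∈ bigT 𝓕 T, θh s x * conv s f T x
      = ∑ t ∈ T, θh s (s * t) * f t := by
    intro s hs
    have hmaps : ∀ t ∈ T, s * t ∈ bigT 𝓕 T := by
      intro t ht
      exact Finset.mem_union_right _ (Finset.mem_biUnion.2
        ⟨s, hs, Finset.mem_image.2 ⟨t, ht, rfl⟩⟩)
    have hfw := Finset.sum_fiberwise_of_maps_to (g := fun t => s * t) hmaps
      (fun t => θh s (s * t) * f t)
    rw [← hfw]
    refine Finset.sum_congr rfl fun x _ => ?_
    rw [show ∑ t ∈ T.filter (fun t => s * t = x), θh s (s * t) * f t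
        = ∑ t ∈ T.filter (fun t => s * t = x), θh s x * f t from
      Finset.sum_congr rfl fun t ht => by rw [(Finset.mem_filter.1 ht).2]]
    rw [← Finset.mul_sum]
    rfl
  have hsubT : ∀ s, ∑ x ∈ bigT 𝓕 T, θh s x * f x = ∑ t ∈ T, θh s t * f t := by
    intro s
    refine (Finset.sum_subset (Finset.subset_union_left) fun x _ hx => ?_).symm
    rw [hfsupp x hx, mul_zero]
  set xh : ↥T → ℝ := fun t => ∑ s ∈ 𝓕, (θh s (s * (t:S)) - θh s (t:S)) with hxhdef
  have hxhK : xh ∈ K := ⟨θh, hθhI, rfl⟩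
  have hchain2 : ε ≤ ∑ t ∈ T, f t * (∑ s ∈ 𝓕, (θh s (s * t) - θh s t)) := by
    calc ε ≤ ∑ s ∈ 𝓕, ∑ x ∈ bigT 𝓕 T, max (conv s f T x - f x) 0 := hAf
      _ = ∑ s ∈ 𝓕, ∑ x ∈ bigT 𝓕 T, θh s x * (conv s f T x - f x) := by
          exact Finset.sum_congr rfl fun s _ => Finset.sum_congr rfl fun x _ => hmax s x
      _ = ∑ s ∈ 𝓕, (∑ x ∈ bigT 𝓕 T, θh s x * conv s f T x
            - ∑ x ∈ bigT 𝓕 T, θh s x * f x) := by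
          refine Finset.sum_congr rfl fun s _ => ?_
          rw [← Finset.sum_sub_distrib]
          exact Finset.sum_congr rfl fun x _ => by ring
      _ = ∑ s ∈ 𝓕, ∑ t ∈ T, (θh s (s * t) - θh s t) * f t := by
          refine Finset.sum_congr rfl fun s hs => ?_
          rw [hfiber s hs, hsubT s, ← Finset.sum_sub_distrib]
          exact Finset.sum_congr rfl fun t _ => by ring
      _ = ∑ t ∈ T, f t * (∑ s ∈ 𝓕, (θh s (s * t) - θh s t)) := by
          rw [Finset.sum_comm]
          refine Finset.sum_congr rfl fun t _ => ?_
          rw [Finset.mul_sum]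
          exact Finset.sum_congr rfl fun s _ => by ring
  have hfinal : ∑ t ∈ T, f t * (∑ s ∈ 𝓕, (θh s (s * t) - θh s t))
      = (∑ t, c t * xh t) / Sc := by
    rw [← Finset.sum_attach T (fun t => f t * (∑ s ∈ 𝓕, (θh s (s * t) - θh s t)))]
    rw [← Finset.univ_eq_attach, Finset.sum_div]
    refine Finset.sum_congr rfl fun t _ => ?_
    rw [hfT t, hxhdef]
    ring
  have hle1 : (∑ t, c t * xh t) / Sc ≤ (-u) / Sc := by
    rw [div_le_div_iff₀ hScpos hScpos]
    exact mul_le_mul_of_nonneg_right (hKbound xh hxhK) (le_of_lt hScpos)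
  have hle2 : (-u) / Sc ≤ ε/2 := by
    rw [div_le_iff₀ hScpos]
    linarith [hubound]
  rw [hfinal] at hchain2
  linarith
end Step2

theorem part1 {S : Type*} [Monoid S] : SemigroupAmenable S → FolnerCondition S := by
  classical
  rintro ⟨μ, hμ, hinv⟩ ε hε 𝓕
  by_contra hcon
  push_neg at hcon
  have hfail : ∀ F : Finset S, F.Nonempty →
      ∃ s ∈ 𝓕, ε * F.card ≤ ((F.image (fun t => s * t) \ F).card : ℝ) := by
    intro F hF
    obtain ⟨s, hs, hlt⟩ := hcon F hF
    refine ⟨s, hs, ?_⟩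
    have hcoe : (((fun t => s * t) '' (F : Set S)) ∪ (F : Set S)).ncard
        = (F.image (fun t => s * t) ∪ F).card := by
      rw [← Finset.coe_image, ← Finset.coe_union, Set.ncard_coe_finset]
    rw [hcoe] at hlt
    have hnat : (F.image (fun t => s * t) \ F).card + F.card
        = (F.image (fun t => s * t) ∪ F).card := Finset.card_sdiff_add_card _ _
    have hcast : ((F.image (fun t => s * t) \ F).card : ℝ) + F.card
        = ((F.image (fun t => s * t) ∪ F).card : ℝ) := by exact_mod_cast hnat
    nlinarith [hlt, hcast]
  have hA : ∀ (T : Finset S) (f : S → ℝ), (∀ x, 0 ≤ f x) → (∀ x ∉ T, f x = 0) →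
      (∑ x ∈ T, f x) = 1 →
      ε ≤ ∑ s ∈ 𝓕, ∑ x ∈ bigT 𝓕 T, max (conv s f T x - f x) 0 :=
    fun T f h1 h2 h3 => stepA 𝓕 ε hfail T f h1 h2 h3
  -- compactness to get a global θ
  haveI : CompactSpace ↥(Set.Icc (0:ℝ) 1) := isCompact_iff_compactSpace.mp isCompact_Icc
  set C : S → Set (S → S → ↥(Set.Icc (0:ℝ) 1)) := fun t =>
    {θ | ε/2 ≤ ∑ s ∈ 𝓕, (((θ s (s * t) : ℝ)) - ((θ s t : ℝ)))} with hC
  have hclosed : ∀ t, IsClosed (C t) := by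
    intro t
    have : IsClosed {θ : S → S → ↥(Set.Icc (0:ℝ) 1) |
        ε/2 ≤ ∑ s ∈ 𝓕, (((θ s (s * t) : ℝ)) - ((θ s t : ℝ)))} := by
      refine isClosed_le continuous_const ?_
      refine continuous_finset_sum _ fun s _ => Continuous.sub ?_ ?_
      · exact continuous_subtype_val.comp ((continuous_apply (s * t)).comp (continuous_apply s))
      · exact continuous_subtype_val.comp ((continuous_apply t).comp (continuous_apply s))
    exact this
  have hFIP : ∀ u : Finset S, (⋂ t ∈ u, C t).Nonempty := by
    intro u
    rcases Finset.eq_empty_or_nonempty u with rfl | hu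
    · exact ⟨fun _ _ => ⟨0, le_refl 0, zero_le_one⟩, by simp⟩
    · obtain ⟨θ, hθI, hθ⟩ := step2 𝓕 ε hε hA u hu
      refine ⟨fun s x => ⟨θ s x, hθI s x⟩, ?_⟩
      simp only [Set.mem_iInter]
      intro t ht
      exact hθ t ht
  have hglobal : (Set.univ ∩ ⋂ t : S, C t).Nonempty := by
    by_contra hcon2
    rw [Set.not_nonempty_iff_eq_empty] at hcon2
    obtain ⟨u, hu⟩ := IsCompact.elim_finite_subfamily_closed isCompact_univ C hclosed hcon2
    obtain ⟨θ, hθ⟩ := hFIP u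
    rw [Set.eq_empty_iff_forall_notMem] at hu
    exact hu θ ⟨Set.mem_univ θ, hθ⟩
  obtain ⟨θb, -, hθb⟩ := hglobal
  rw [Set.mem_iInter] at hθb
  set θ' : S → S → ℝ := fun s x => (θb s x : ℝ) with hθ'def
  have hθ'0 : ∀ s x, 0 ≤ θ' s x := fun s x => (θb s x).2.1
  have hθ'1 : ∀ s x, θ' s x ≤ 1 := fun s x => (θb s x).2.2
  have hgap : ∀ t : S, ε/2 ≤ ∑ s ∈ 𝓕, (θ' s (s * t) - θ' s t) := fun t => hθb t
  -- discretize and use the measure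
  set n : ℕ := 𝓕.card with hn
  set Kn : ℕ := ⌈(4 * (n:ℝ)) / ε⌉₊ + 1 with hKn
  have hKpos : (0:ℝ) < (Kn:ℝ) := by
    rw [hKn]; push_cast; positivity
  have hKb : (n : ℝ) / Kn ≤ ε / 4 := by
    have h1 : (4 * (n:ℝ))/ε ≤ (Kn:ℝ) := by
      rw [hKn]
      push_cast
      linarith [Nat.le_ceil ((4 * (n:ℝ))/ε)]
    have h2 : 4 * (n:ℝ) ≤ ε * Kn := by
      rw [div_le_iff₀ hε] at h1; linarith
    rw [div_le_div_iff₀ hKpos (by norm_num : (0:ℝ) < 4)]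
    linarith
  set B : S → ℤ → Set S := fun s k => {t : S | ⌊(Kn:ℝ) * θ' s t⌋ = k} with hB
  set A : S × ℤ × Bool → Set S := fun p =>
    if p.2.2 then {t : S | p.1 * t ∈ B p.1 p.2.1} else B p.1 p.2.1 with hAdef
  set co : S × ℤ × Bool → ℝ := fun p =>
    if p.2.2 then ((p.2.1 : ℝ))/Kn else -(((p.2.1 : ℝ))/Kn) with hco
  set I : Finset (S × ℤ × Bool) :=
    𝓕 ×ˢ ((Finset.Icc (0:ℤ) (Kn:ℤ)) ×ˢ (Finset.univ : Finset Bool)) with hI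
  have hfl_mem : ∀ x : ℝ, 0 ≤ x → x ≤ 1 → ⌊(Kn:ℝ) * x⌋ ∈ Finset.Icc (0:ℤ) (Kn:ℤ) := by
    intro x h0 h1
    rw [Finset.mem_Icc]
    constructor
    · exact Int.floor_nonneg.2 (mul_nonneg (le_of_lt hKpos) h0)
    · have hle : (Kn:ℝ) * x ≤ ((Kn:ℤ):ℝ) := by
        rw [Int.cast_natCast]
        nlinarith [hKpos]
      have h2 := Int.floor_le_floor hle
      rwa [Int.floor_intCast] at h2
  have hfloorsum : ∀ (x : ℝ), 0 ≤ x → x ≤ 1 → ∀ (sgn : ℝ),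
      ∑ k ∈ Finset.Icc (0:ℤ) (Kn:ℤ), (if ⌊(Kn:ℝ) * x⌋ = k then sgn * ((k:ℝ)/Kn) else 0)
        = sgn * ((⌊(Kn:ℝ) * x⌋ : ℝ)/Kn) := by
    intro x h0 h1 sgn
    rw [Finset.sum_eq_single_of_mem ⌊(Kn:ℝ) * x⌋ (hfl_mem x h0 h1)]
    · rw [if_pos rfl]
    · intro k _ hk
      rw [if_neg (fun h => hk h.symm)]
  have hpoint : ∀ t : S, ε/4 ≤ ∑ p ∈ I, (A p).indicator (fun _ => co p) t := by
    intro t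
    rw [hI, Finset.sum_product]
    have hper : ∀ s ∈ 𝓕,
        ∑ q ∈ (Finset.Icc (0:ℤ) (Kn:ℤ)) ×ˢ (Finset.univ : Finset Bool),
          (A (s, q)).indicator (fun _ => co (s, q)) t
        = ((⌊(Kn:ℝ) * θ' s (s * t)⌋ : ℝ))/Kn - ((⌊(Kn:ℝ) * θ' s t⌋ : ℝ))/Kn := by
      intro s _
      rw [Finset.sum_product]
      have hbool : ∀ k ∈ Finset.Icc (0:ℤ) (Kn:ℤ),
          ∑ b ∈ (Finset.univ : Finset Bool), (A (s, k, b)).indicator (fun _ => co (s, k, b)) t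
          = (if ⌊(Kn:ℝ) * θ' s (s * t)⌋ = k then (1:ℝ) * ((k:ℝ)/Kn) else 0)
            + (if ⌊(Kn:ℝ) * θ' s t⌋ = k then (-1:ℝ) * ((k:ℝ)/Kn) else 0) := by
        intro k _
        rw [show (Finset.univ : Finset Bool) = {true, false} by rfl]
        rw [Finset.sum_insert (by simp), Finset.sum_singleton]
        have hAt : A (s, k, true) = {t : S | ⌊(Kn:ℝ) * θ' s (s * t)⌋ = k} := by
          simp only [hAdef, hB]
          simp only [if_true]
          rfl
        have hAf : A (s, k, false) = {t : S | ⌊(Kn:ℝ) * θ' s t⌋ = k} := by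
          simp only [hAdef, hB]
          rw [if_neg (by simp)]
        have hcot : co (s, k, true) = (k:ℝ)/Kn := by
          simp only [hco]
          simp only [if_true]
        have hcof : co (s, k, false) = -((k:ℝ)/Kn) := by
          simp only [hco]
          rw [if_neg (by simp)]
        congr 1
        · rw [Set.indicator_apply, hcot, hAt]
          simp only [Set.mem_setOf_eq]
          by_cases h : ⌊(Kn:ℝ) * θ' s (s * t)⌋ = k
          · rw [if_pos h, if_pos h, one_mul]
          · rw [if_neg h, if_neg h]
        · rw [Set.indicator_apply, hcof, hAf]
          simp only [Set.mem_setOf_eq]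
          by_cases h : ⌊(Kn:ℝ) * θ' s t⌋ = k
          · rw [if_pos h, if_pos h]
            ring
          · rw [if_neg h, if_neg h]
      rw [Finset.sum_congr rfl hbool, Finset.sum_add_distrib,
        hfloorsum _ (hθ'0 s (s*t)) (hθ'1 s (s*t)) 1,
        hfloorsum _ (hθ'0 s t) (hθ'1 s t) (-1)]
      ring
    rw [Finset.sum_congr rfl hper]
    have hlower : ∀ s ∈ 𝓕,
        (θ' s (s * t) - θ' s t) - 1/Kn ≤
        ((⌊(Kn:ℝ) * θ' s (s * t)⌋ : ℝ))/Kn - ((⌊(Kn:ℝ) * θ' s t⌋ : ℝ))/Kn := by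
      intro s _
      have h1 : (Kn:ℝ) * θ' s (s*t) - 1 < (⌊(Kn:ℝ) * θ' s (s * t)⌋ : ℝ) :=
        Int.sub_one_lt_floor _
      have h2 : (⌊(Kn:ℝ) * θ' s t⌋ : ℝ) ≤ (Kn:ℝ) * θ' s t := Int.floor_le _
      rw [div_sub_div_same, le_div_iff₀ hKpos]
      have h3 : (1:ℝ)/(Kn:ℝ) * (Kn:ℝ) = 1 := one_div_mul_cancel (ne_of_gt hKpos)
      nlinarith [h1, h2, h3]
    calc ε/4 = ε/2 - ε/4 := by ring
      _ ≤ (∑ s ∈ 𝓕, (θ' s (s * t) - θ' s t)) - (n:ℝ)/Kn := by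
          have := hgap t
          linarith [hKb]
      _ = ∑ s ∈ 𝓕, ((θ' s (s * t) - θ' s t) - 1/Kn) := by
          have hds : ∑ s ∈ 𝓕, ((θ' s (s * t) - θ' s t) - 1/Kn)
              = (∑ s ∈ 𝓕, (θ' s (s * t) - θ' s t)) - (n:ℝ)/Kn := by
            rw [Finset.sum_sub_distrib, Finset.sum_const, ← hn, nsmul_eq_mul]
            ring
          rw [hds]
      _ ≤ ∑ s ∈ 𝓕, (((⌊(Kn:ℝ) * θ' s (s * t)⌋ : ℝ))/Kn - ((⌊(Kn:ℝ) * θ' s t⌋ : ℝ))/Kn) :=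
          Finset.sum_le_sum hlower
  have hzero : ∑ p ∈ I, co p * μ (A p) = 0 := by
    rw [hI, Finset.sum_product]
    refine Finset.sum_eq_zero fun s _ => ?_
    rw [Finset.sum_product]
    refine Finset.sum_eq_zero fun k _ => ?_
    rw [show (Finset.univ : Finset Bool) = {true, false} by rfl]
    rw [Finset.sum_insert (by simp), Finset.sum_singleton]
    have htrue : A (s, k, true) = {t : S | s * t ∈ B s k} := by
      simp only [hAdef]
      simp only [if_true]
    have hfalse : A (s, k, false) = B s k := by
      simp only [hAdef]
      rw [if_neg (by simp)]
    rw [htrue, hfalse, hinv s (B s k)]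
    simp only [hco]
    norm_num
  have hfinal := key_lemma hμ I A co (ε/4) hpoint
  rw [hzero] at hfinal
  linarith

theorem part2 (S : Type*) [Monoid S] (hF : FolnerCondition S) :
    AlgebraicallyAmenable (MonoidAlgebra ℂ S) := by
  classical
  intro ε hε 𝓕
  set T : Finset S := 𝓕.biUnion (fun a => a.coeff.support) with hTdef
  set k : ℕ := T.card with hk
  have hε' : (0:ℝ) < ε / (k+1) := by positivity
  obtain ⟨F, hFne, hFol⟩ := hF (ε/(k+1)) hε' T
  set v : S → MonoidAlgebra ℂ S := fun s => MonoidAlgebra.single s (1:ℂ) with hv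
  have hvinj : Function.Injective v := fun a b h => by
    simpa [hv] using MonoidAlgebra.single_left_injective (M := S) (one_ne_zero (α := ℂ)) h
  set Fs : Finset (MonoidAlgebra ℂ S) := F.image v with hFs
  set W : Submodule ℂ (MonoidAlgebra ℂ S) := Submodule.span ℂ (Fs : Set (MonoidAlgebra ℂ S)) with hW
  have hli : LinearIndependent ℂ (Subtype.val : ↥(Fs : Set (MonoidAlgebra ℂ S)) → MonoidAlgebra ℂ S) := by
    have h1 : LinearIndependent ℂ v := by
      have := (MonoidAlgebra.basis S ℂ).linearIndependent
      convert this using 1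
      funext s
      exact (MonoidAlgebra.basis_apply ℂ s).symm
    have h2 := h1.comp (Subtype.val : ↥(F : Set S) → S) Subtype.val_injective
    have hr : Set.range (v ∘ (Subtype.val : ↥(F : Set S) → S)) = (Fs : Set (MonoidAlgebra ℂ S)) := by
      rw [Set.range_comp, Subtype.range_val]
      simp [hFs, Finset.coe_image]
    have h3 := (linearIndepOn_id_range_iff h2.injective).mpr h2
    rw [hr] at h3
    exact h3
  have hrankW : Module.finrank ℂ ↥W = F.card := by
    rw [hW, finrank_span_finset_eq_card (by exact hli), hFs,
      Finset.card_image_of_injective _ hvinj]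
  refine ⟨W, ?_, inferInstance, ?_⟩
  · obtain ⟨f, hf⟩ := hFne
    intro hbot
    have hmem : v f ∈ W := Submodule.subset_span (by simp [hFs]; exact ⟨f, hf, rfl⟩)
    rw [hbot, Submodule.mem_bot] at hmem
    exact (one_ne_zero (α := ℂ)) (by simpa [hv, Finsupp.single_eq_zero] using hmem)
  · intro a ha
    set G : Finset S := F ∪ T.biUnion (fun s => F.image (fun t => s * t) \ F) with hG
    set Gs : Finset (MonoidAlgebra ℂ S) := G.image v with hGs
    have hsub : W.map (LinearMap.mulLeft ℂ a) ⊔ W ≤ Submodule.span ℂ (Gs : Set (MonoidAlgebra ℂ S)) := by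
      refine sup_le ?_ ?_
      · rw [hW, Submodule.map_span]
        refine Submodule.span_le.2 ?_
        rintro x ⟨y, hy, rfl⟩
        rw [Finset.mem_coe, hFs, Finset.mem_image] at hy
        obtain ⟨f, hfF, rfl⟩ := hy
        show a * v f ∈ _
        have hdecomp : a * v f = a.coeff.sum fun s c => MonoidAlgebra.single (s * f) c := by
          conv_lhs => rw [← MonoidAlgebra.ofCoeff_coeff a, ← Finsupp.sum_single a.coeff,
            MonoidAlgebra.ofCoeff_finsuppSum]
          rw [Finsupp.sum_mul]
          refine Finset.sum_congr rfl fun s hs => ?_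
          rw [hv]
          exact ((MonoidAlgebra.single_mul_single _ _ _ _).trans (by rw [mul_one]))
        rw [hdecomp]
        refine Submodule.sum_mem _ fun s hs => ?_
        show MonoidAlgebra.single (s * f) (a.coeff s) ∈ _
        have : MonoidAlgebra.single (s * f) (a.coeff s) = (a.coeff s) • v (s * f) := by
          simp [hv, Finsupp.smul_single]
        rw [this]
        refine Submodule.smul_mem _ _ (Submodule.subset_span ?_)
        rw [Finset.mem_coe, hGs, Finset.mem_image]
        refine ⟨s * f, ?_, rfl⟩
        by_cases hmem : s * f ∈ F
        · exact Finset.mem_union_left _ hmem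
        · refine Finset.mem_union_right _ (Finset.mem_biUnion.2 ⟨s, ?_, ?_⟩)
          · exact Finset.mem_biUnion.2 ⟨a, ha, hs⟩
          · exact Finset.mem_sdiff.2 ⟨Finset.mem_image.2 ⟨f, hfF, rfl⟩, hmem⟩
      · rw [hW]
        exact Submodule.span_mono (by exact_mod_cast Finset.image_subset_image (Finset.subset_union_left))
    have hrank2 : Module.finrank ℂ ↥(W.map (LinearMap.mulLeft ℂ a) ⊔ W) ≤ G.card := by
      calc Module.finrank ℂ ↥(W.map (LinearMap.mulLeft ℂ a) ⊔ W)
          ≤ Module.finrank ℂ ↥(Submodule.span ℂ (Gs : Set (MonoidAlgebra ℂ S))) :=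
            Submodule.finrank_mono hsub
        _ ≤ Gs.card := finrank_span_finset_le_card Gs
        _ ≤ G.card := Finset.card_image_le
    have hGcard : (G.card : ℝ) ≤ (1 + ε) * F.card := by
      have h1 : (G.card : ℝ) ≤ F.card + ∑ s ∈ T, ((F.image (fun t => s * t) \ F).card : ℝ) := by
        calc (G.card : ℝ) ≤ (F.card : ℝ) + ((T.biUnion (fun s => F.image (fun t => s * t) \ F)).card : ℝ) := by
              rw [hG]; exact_mod_cast Finset.card_union_le _ _
          _ ≤ _ := by
              have := Finset.card_biUnion_le (s := T) (t := fun s => F.image (fun t => s * t) \ F)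
              push_cast
              exact add_le_add_right (by exact_mod_cast this) _
      have h2 : ∀ s ∈ T, ((F.image (fun t => s * t) \ F).card : ℝ) ≤ (ε/(k+1)) * F.card := by
        intro s hs
        have := hFol s hs
        have hcoe : (((fun t => s * t) '' (F : Set S)) ∪ (F : Set S)).ncard
            = (F.image (fun t => s * t) ∪ F).card := by
          rw [← Finset.coe_image, ← Finset.coe_union, Set.ncard_coe_finset]
        rw [hcoe] at this
        have hnat : (F.image (fun t => s * t) \ F).card + F.card
            = (F.image (fun t => s * t) ∪ F).card := Finset.card_sdiff_add_card _ _
        have hcard : ((F.image (fun t => s * t) \ F).card : ℝ) + F.card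
            = ((F.image (fun t => s * t) ∪ F).card : ℝ) := by exact_mod_cast hnat
        nlinarith [this, hcard]
      calc (G.card : ℝ) ≤ F.card + ∑ s ∈ T, ((F.image (fun t => s * t) \ F).card : ℝ) := h1
        _ ≤ F.card + ∑ _s ∈ T, (ε/(k+1)) * F.card := by
            exact add_le_add_right (Finset.sum_le_sum h2) _
        _ = F.card + k * ((ε/(k+1)) * F.card) := by rw [Finset.sum_const, hk]; push_cast; ring
        _ ≤ (1 + ε) * F.card := by
            have hFpos : (0:ℝ) ≤ (F.card : ℝ) := Nat.cast_nonneg _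
            have hkk : (k:ℝ) * (ε/(k+1)) ≤ ε := by
              rw [div_eq_mul_inv]
              have h1 : (0:ℝ) < (k:ℝ)+1 := by positivity
              rw [mul_comm (ε) _, ← mul_assoc]
              calc (k:ℝ) * ((k:ℝ)+1)⁻¹ * ε ≤ 1 * ε := by
                    refine mul_le_mul_of_nonneg_right ?_ (le_of_lt hε)
                    rw [mul_inv_le_iff₀ h1]; linarith
                _ = ε := one_mul ε
            nlinarith
    rw [hrankW]
    calc (Module.finrank ℂ ↥(W.map (LinearMap.mulLeft ℂ a) ⊔ W) : ℝ) ≤ G.card := by exact_mod_cast hrank2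
      _ ≤ (1 + ε) * F.card := hGcard

end Helpers

/-- (i) an amenable countable unital semigroup satisfies the Følner condition;
(ii) the Følner condition implies algebraic amenability of the semigroup algebra `ℂS`. -/
theorem statement0 (S : Type*) [Monoid S] [Countable S] :
    (SemigroupAmenable S → FolnerCondition S) ∧
    (FolnerCondition S → AlgebraicallyAmenable (MonoidAlgebra ℂ S)) := by
  exact ⟨part1, part2 S⟩
end

section
/- Let S be a semigroup. If S satisfies the Følner condition but does not satisfy the proper Følner condition, then there exists an element a ∈ S such that the principal left ideal Sa = {sa : s ∈ S} is finite. -/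
/-- The proper Følner condition: in addition the Følner set `F` can be chosen to contain
any prescribed finite set `A`. -/
def ProperFolnerCondition (S : Type*) [Mul S] : Prop :=
  ∀ ε : ℝ, 0 < ε → ∀ 𝓕 A : Finset S, ∃ F : Finset S, F.Nonempty ∧ A ⊆ F ∧
    ∀ s ∈ 𝓕, ((((fun t => s * t) '' (F : Set S)) ∪ (F : Set S)).ncard : ℝ) ≤ (1 + ε) * F.card

/-- If a semigroup satisfies the Følner condition but not the proper Følner condition then
some principal left ideal `Sa = {s * a : s ∈ S}` is finite. -/
theorem statement3 (S : Type*) [Semigroup S]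
    (h1 : FolnerCondition S) (h2 : ¬ ProperFolnerCondition S) :
    ∃ a : S, (Set.range fun s : S => s * a).Finite := by
  classical
  rw [ProperFolnerCondition] at h2
  push_neg at h2
  obtain ⟨ε, hε, 𝓕₀, A₀, hA⟩ := h2
  set B : ℝ := 4 * A₀.card / ε + 1 with hBdef
  have hB0 : 0 < B := by
    rw [hBdef]; positivity
  -- Step 2: every (ε/2, 𝓕₀)-Følner set is small
  have key2 : ∀ F : Finset S, F.Nonempty →
      (∀ s ∈ 𝓕₀, ((((fun t => s * t) '' (F : Set S)) ∪ (F : Set S)).ncard : ℝ)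
        ≤ (1 + ε / 2) * F.card) → (F.card : ℝ) < B := by
    intro F hFne hFol
    by_contra hge
    push_neg at hge
    obtain ⟨s, hs, hlt⟩ := hA (F ∪ A₀) (hFne.mono Finset.subset_union_left)
      Finset.subset_union_right
    have hFbig : 4 * (A₀.card : ℝ) / ε < F.card := by
      calc 4 * (A₀.card : ℝ) / ε < B := by rw [hBdef]; linarith
        _ ≤ F.card := hge
    have hsub : ((fun t => s * t) '' ((F ∪ A₀ : Finset S) : Set S) ∪ ((F ∪ A₀ : Finset S) : Set S))
        ⊆ (((fun t => s * t) '' (F : Set S)) ∪ (F : Set S)) ∪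
          (((fun t => s * t) '' (A₀ : Set S)) ∪ (A₀ : Set S)) := by
      rw [Finset.coe_union, Set.image_union]
      intro x hx
      rcases hx with (h | h) | (h | h)
      · exact Or.inl (Or.inl h)
      · exact Or.inr (Or.inl h)
      · exact Or.inl (Or.inr h)
      · exact Or.inr (Or.inr h)
    have hfin1 : (((fun t => s * t) '' (F : Set S)) ∪ (F : Set S)).Finite :=
      (F.finite_toSet.image _).union F.finite_toSet
    have hfin2 : (((fun t => s * t) '' (A₀ : Set S)) ∪ (A₀ : Set S)).Finite :=
      (A₀.finite_toSet.image _).union A₀.finite_toSet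
    have hcard1 : ((fun t => s * t) '' ((F ∪ A₀ : Finset S) : Set S)
        ∪ ((F ∪ A₀ : Finset S) : Set S)).ncard
        ≤ (((fun t => s * t) '' (F : Set S)) ∪ (F : Set S)).ncard
          + ((((fun t => s * t) '' (A₀ : Set S)) ∪ (A₀ : Set S)).ncard) := by
      calc ((fun t => s * t) '' ((F ∪ A₀ : Finset S) : Set S)
            ∪ ((F ∪ A₀ : Finset S) : Set S)).ncard
          ≤ ((((fun t => s * t) '' (F : Set S)) ∪ (F : Set S)) ∪
            (((fun t => s * t) '' (A₀ : Set S)) ∪ (A₀ : Set S))).ncard :=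
            Set.ncard_le_ncard hsub (hfin1.union hfin2)
        _ ≤ _ := Set.ncard_union_le _ _
    have hcard2 : ((((fun t => s * t) '' (A₀ : Set S)) ∪ (A₀ : Set S)).ncard : ℝ)
        ≤ 2 * A₀.card := by
      have h1 : (((fun t => s * t) '' (A₀ : Set S)) ∪ (A₀ : Set S)).ncard
          ≤ ((fun t => s * t) '' (A₀ : Set S)).ncard + (A₀ : Set S).ncard :=
        Set.ncard_union_le _ _
      have h2 : ((fun t => s * t) '' (A₀ : Set S)).ncard ≤ (A₀ : Set S).ncard :=
        Set.ncard_image_le A₀.finite_toSet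
      have h3 : (A₀ : Set S).ncard = A₀.card := Set.ncard_coe_finset _
      -- cast
      have := le_trans h1 (by omega : ((fun t => s * t) '' (A₀ : Set S)).ncard
        + (A₀ : Set S).ncard ≤ 2 * A₀.card)
      exact_mod_cast this
    have hF2 := hFol s hs
    -- combine
    have hcards : ((F ∪ A₀).card : ℝ) ≥ F.card := by
      exact_mod_cast Finset.card_le_card (Finset.subset_union_left)
    have hAcard : 2 * (A₀.card : ℝ) ≤ ε / 2 * F.card := by
      rw [div_lt_iff₀ hε] at hFbig
      nlinarith
    have hle : (((fun t => s * t) '' ((F ∪ A₀ : Finset S) : Set S)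
        ∪ ((F ∪ A₀ : Finset S) : Set S)).ncard : ℝ) ≤ (1 + ε) * (F ∪ A₀).card := by
      calc (((fun t => s * t) '' ((F ∪ A₀ : Finset S) : Set S)
            ∪ ((F ∪ A₀ : Finset S) : Set S)).ncard : ℝ)
          ≤ (((fun t => s * t) '' (F : Set S)) ∪ (F : Set S)).ncard
            + ((((fun t => s * t) '' (A₀ : Set S)) ∪ (A₀ : Set S)).ncard : ℝ) := by
            exact_mod_cast hcard1
        _ ≤ (1 + ε / 2) * F.card + 2 * A₀.card := by linarith [hF2, hcard2]
        _ ≤ (1 + ε / 2) * F.card + ε / 2 * F.card := by linarith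
        _ = (1 + ε) * F.card := by ring
        _ ≤ (1 + ε) * (F ∪ A₀).card := by nlinarith
    exact absurd hle (not_le.mpr hlt)
  -- Step 3: exact invariant sets for every finite 𝓕
  have key3 : ∀ 𝓕 : Finset S, ∃ F : Finset S, F.Nonempty ∧
      ∀ s ∈ 𝓕 ∪ 𝓕₀, (fun t => s * t) '' (F : Set S) ⊆ (F : Set S) := by
    intro 𝓕
    have hδ0 : 0 < min (ε / 2) (1 / B) := lt_min (by linarith) (by positivity)
    obtain ⟨F, hFne, hFol⟩ := h1 (min (ε / 2) (1 / B)) hδ0 (𝓕 ∪ 𝓕₀)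
    have hFcard : (F.card : ℝ) < B := by
      apply key2 F hFne
      intro s hs
      have := hFol s (Finset.mem_union_right 𝓕 hs)
      have hmin : min (ε / 2) (1 / B) ≤ ε / 2 := min_le_left _ _
      nlinarith [Nat.cast_nonneg (α := ℝ) F.card]
    refine ⟨F, hFne, ?_⟩
    intro s hs
    have hF := hFol s hs
    have hfin : (((fun t => s * t) '' (F : Set S)) ∪ (F : Set S)).Finite :=
      (F.finite_toSet.image _).union F.finite_toSet
    have hgeF : F.card ≤ (((fun t => s * t) '' (F : Set S)) ∪ (F : Set S)).ncard := by
      have := Set.ncard_le_ncard (Set.subset_union_right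
        (s := (fun t => s * t) '' (F : Set S)) (t := (F : Set S))) hfin
      rwa [Set.ncard_coe_finset] at this
    have hltF : ((((fun t => s * t) '' (F : Set S)) ∪ (F : Set S)).ncard : ℝ)
        < F.card + 1 := by
      have hmin : min (ε / 2) (1 / B) ≤ 1 / B := min_le_right _ _
      have : (1 / B) * F.card < 1 := by
        rw [div_mul_eq_mul_div, div_lt_one hB0]
        linarith
      nlinarith [Nat.cast_nonneg (α := ℝ) F.card]
    have hcardeq : (((fun t => s * t) '' (F : Set S)) ∪ (F : Set S)).ncard ≤ F.card := by
      have : ((((fun t => s * t) '' (F : Set S)) ∪ (F : Set S)).ncard : ℝ) < F.card + 1 := hltF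
      exact_mod_cast Nat.lt_add_one_iff.mp (by exact_mod_cast this)
    have heq : (F : Set S) = ((fun t => s * t) '' (F : Set S)) ∪ (F : Set S) :=
      Set.eq_of_subset_of_ncard_le Set.subset_union_right
        (by rw [Set.ncard_coe_finset]; exact hcardeq) hfin
    intro x hx
    rw [heq]
    exact Or.inl hx
  choose f hfne hfcl using key3
  -- Step 4: the union of all the invariant sets is finite
  set W : Set S := ⋃ 𝓕 : Finset S, (f 𝓕 : Set S) with hWdef
  have hWfin : W.Finite := by
    by_contra hinf
    have hinf' : W.Infinite := hinf
    obtain ⟨X, hXW, hXfin, hXcard⟩ := hinf'.exists_subset_ncard_eq ⌈B⌉₊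
    -- each x ∈ X lies in some f 𝓕
    have hx : ∀ x ∈ hXfin.toFinset, ∃ 𝓕 : Finset S, x ∈ f 𝓕 := by
      intro x hxX
      have : x ∈ W := hXW (hXfin.mem_toFinset.mp hxX)
      rw [hWdef, Set.mem_iUnion] at this
      obtain ⟨𝓕, h𝓕⟩ := this
      exact ⟨𝓕, by exact_mod_cast h𝓕⟩
    choose g hg using hx
    set U : Finset S := hXfin.toFinset.attach.biUnion (fun x => f (g x.1 x.2)) with hUdef
    have hXU : hXfin.toFinset ⊆ U := by
      intro x hxX
      rw [hUdef]
      exact Finset.mem_biUnion.mpr ⟨⟨x, hxX⟩, Finset.mem_attach _ _, hg x hxX⟩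
    have hXne : hXfin.toFinset.Nonempty := by
      rw [← Finset.card_pos]
      have : hXfin.toFinset.card = ⌈B⌉₊ := by
        rw [← Set.ncard_coe_finset, hXfin.coe_toFinset]; exact hXcard
      rw [this]
      exact Nat.ceil_pos.mpr hB0
    have hUne : U.Nonempty := hXne.mono hXU
    have hUcl : ∀ s ∈ 𝓕₀, (fun t => s * t) '' (U : Set S) ⊆ (U : Set S) := by
      intro s hs y hy
      obtain ⟨x, hxU, rfl⟩ := hy
      have hxU' : x ∈ U := by exact_mod_cast hxU
      rw [hUdef] at hxU'
      obtain ⟨z, _, hz⟩ := Finset.mem_biUnion.mp hxU'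
      have : s * x ∈ (f (g z.1 z.2) : Set S) :=
        hfcl (g z.1 z.2) s (Finset.mem_union_right _ hs) ⟨x, by exact_mod_cast hz, rfl⟩
      have : s * x ∈ U := by
        rw [hUdef]
        exact Finset.mem_biUnion.mpr ⟨z, Finset.mem_attach _ _, by exact_mod_cast this⟩
      exact_mod_cast this
    have hUsmall : (U.card : ℝ) < B := by
      apply key2 U hUne
      intro s hs
      have : ((fun t => s * t) '' (U : Set S)) ∪ (U : Set S) = (U : Set S) :=
        Set.union_eq_self_of_subset_left (hUcl s hs)
      rw [this, Set.ncard_coe_finset]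
      nlinarith [Nat.cast_nonneg (α := ℝ) U.card]
    have hUbig : (⌈B⌉₊ : ℝ) ≤ U.card := by
      have h1 : hXfin.toFinset.card ≤ U.card := Finset.card_le_card hXU
      have h2 : hXfin.toFinset.card = ⌈B⌉₊ := by
        rw [← Set.ncard_coe_finset, hXfin.coe_toFinset]; exact hXcard
      exact_mod_cast h2 ▸ h1
    have := Nat.le_ceil B
    linarith
  -- Step 5: some value of f occurs cofinally
  have hfW : ∀ 𝓕 : Finset S, f 𝓕 ∈ hWfin.toFinset.powerset := by
    intro 𝓕
    rw [Finset.mem_powerset]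
    intro x hx
    rw [Set.Finite.mem_toFinset]
    exact Set.mem_iUnion.mpr ⟨𝓕, by exact_mod_cast hx⟩
  have hcof : ∃ G : Finset S, ∀ 𝓕 : Finset S, ∃ 𝓕', 𝓕 ⊆ 𝓕' ∧ f 𝓕' = G := by
    by_contra hno
    push_neg at hno
    choose T hT using hno
    set 𝓕s : Finset S := hWfin.toFinset.powerset.sup T with h𝓕s
    exact hT (f 𝓕s) 𝓕s (Finset.le_sup (hfW 𝓕s)) rfl
  obtain ⟨G, hG⟩ := hcof
  obtain ⟨𝓕₁, -, hG1⟩ := hG ∅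
  have hGne : G.Nonempty := hG1 ▸ hfne 𝓕₁
  obtain ⟨a, ha⟩ := hGne
  refine ⟨a, Set.Finite.subset G.finite_toSet ?_⟩
  rintro y ⟨t, rfl⟩
  obtain ⟨𝓕', h𝓕', hfG⟩ := hG {t}
  have hcl := hfcl 𝓕' t (Finset.mem_union_left _ (h𝓕' (Finset.mem_singleton_self t)))
  rw [hfG] at hcl
  exact hcl ⟨a, by exact_mod_cast ha, rfl⟩
end

section
/- Let S be a countable discrete inverse semigroup with identity 1 ∈ S and let μ be a finitely additive probability measure on S. Then μ is invariant (i.e., μ(A) = μ(s⁻¹A) for all s ∈ S, A ⊆ S) if and only if for all s ∈ S and A ⊆ S both of the following hold: (2.a) μ(A) = μ(A ∩ (s*s)A), and (2.b) μ((s*s)A) = μ(sA). -/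
/-- Mixin recording that a semigroup with a star operation is an inverse semigroup:
for every `s` the element `star s` is the unique `t` with `s t s = s` and `t s t = t`. -/
class IsInverseSemigroup (S : Type*) [Semigroup S] [Star S] : Prop where
  mul_star_mul_self : ∀ s : S, s * star s * s = s
  star_mul_self_mul_star : ∀ s : S, star s * s * star s = star s
  star_unique : ∀ s t : S, s * t * s = s → t * s * t = t → t = star s

/-- The image `sA` of a subset under left multiplication. -/
def lmulSet {S : Type*} [Mul S] (s : S) (A : Set S) : Set S := (fun t => s * t) '' A

lemma invsemi_star_star {S : Type*} [Semigroup S] [Star S] [IsInverseSemigroup S] (s : S) :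
    star (star s) = s :=
  (IsInverseSemigroup.star_unique (star s) s
    (IsInverseSemigroup.star_mul_self_mul_star s)
    (IsInverseSemigroup.mul_star_mul_self s)).symm

lemma invsemi_mul_e {S : Type*} [Semigroup S] [Star S] [IsInverseSemigroup S] (s : S) :
    s * (star s * s) = s := by
  rw [← mul_assoc]; exact IsInverseSemigroup.mul_star_mul_self s

lemma invsemi_e_idem {S : Type*} [Semigroup S] [Star S] [IsInverseSemigroup S] (s : S) :
    (star s * s) * (star s * s) = star s * s := by
  rw [mul_assoc, ← mul_assoc s, IsInverseSemigroup.mul_star_mul_self]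

lemma invsemi_f_idem {S : Type*} [Semigroup S] [Star S] [IsInverseSemigroup S] (s : S) :
    (s * star s) * (s * star s) = s * star s := by
  have := invsemi_e_idem (star s)
  rwa [invsemi_star_star] at this

/-- A finitely additive probability measure `μ` on a countable unital inverse semigroup is
invariant (`μ(A) = μ(s⁻¹A)` for all `s`, `A`) if and only if for all `s`, `A`:
(2.a) `μ(A) = μ(A ∩ (s*s)A)` and (2.b) `μ((s*s)A) = μ(sA)`. -/
theorem statement5 (S : Type*) [Monoid S] [Star S] [IsInverseSemigroup S] [Countable S]
    (μ : Set S → ℝ) (hμ : IsFinAddProb μ) :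
    (∀ (s : S) (A : Set S), μ A = μ {t | s * t ∈ A}) ↔
    (∀ (s : S) (A : Set S),
      μ A = μ (A ∩ lmulSet (star s * s) A) ∧
      μ (lmulSet (star s * s) A) = μ (lmulSet s A)) := by
  constructor
  · intro hinv s A
    set e := star s * s with he
    constructor
    · -- (2.a)
      have h1 : {t | e * t ∈ A ∩ lmulSet e A} = {t | e * t ∈ A} := by
        ext t
        simp only [Set.mem_setOf_eq, Set.mem_inter_iff, lmulSet, Set.mem_image]
        refine ⟨fun h => h.1, fun h => ⟨h, e * t, h, ?_⟩⟩
        rw [← mul_assoc, he, invsemi_e_idem]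
      calc μ A = μ {t | e * t ∈ A} := hinv e A
        _ = μ {t | e * t ∈ A ∩ lmulSet e A} := by rw [h1]
        _ = μ (A ∩ lmulSet e A) := (hinv e _).symm
    · -- (2.b)
      have h2 : {t | e * t ∈ lmulSet e A} = {t | s * t ∈ lmulSet s A} := by
        ext t
        simp only [Set.mem_setOf_eq, lmulSet, Set.mem_image]
        constructor
        · rintro ⟨a, ha, hea⟩
          refine ⟨a, ha, ?_⟩
          have h' : s * (e * a) = s * (e * t) := by rw [hea]
          simp only [he, ← mul_assoc] at h'
          rwa [IsInverseSemigroup.mul_star_mul_self] at h' 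
        · rintro ⟨a, ha, hsa⟩
          refine ⟨a, ha, ?_⟩
          show star s * s * a = star s * s * t
          rw [mul_assoc, mul_assoc, hsa]
      calc μ (lmulSet e A) = μ {t | e * t ∈ lmulSet e A} := hinv e _
        _ = μ {t | s * t ∈ lmulSet s A} := by rw [h2]
        _ = μ (lmulSet s A) := (hinv s _).symm
  · intro h s A
    set e := star s * s with he
    set B := {t | s * t ∈ A} with hB
    have hsub : lmulSet e B ⊆ B := by
      rintro x ⟨t, ht, rfl⟩
      show s * (e * t) ∈ A
      rw [← mul_assoc, he, invsemi_mul_e]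
      exact ht
    have h1 : μ B = μ (lmulSet e B) := by
      have := (h s B).1
      rwa [Set.inter_eq_self_of_subset_right hsub] at this
    have h2 : μ (lmulSet e B) = μ (lmulSet s B) := (h s B).2
    have h3 : lmulSet s B = A ∩ lmulSet (s * star s) A := by
      ext x
      simp only [lmulSet, Set.mem_image, Set.mem_inter_iff, hB, Set.mem_setOf_eq]
      constructor
      · rintro ⟨t, ht, rfl⟩
        refine ⟨ht, s * t, ht, ?_⟩
        rw [← mul_assoc, IsInverseSemigroup.mul_star_mul_self]
      · rintro ⟨hx, a, ha, rfl⟩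
        have hff : s * (star s * (s * star s * a)) = s * star s * a := by
          rw [← mul_assoc, ← mul_assoc, invsemi_f_idem]
        exact ⟨star s * (s * star s * a), by rw [hff]; exact hx, hff⟩
    have h4 : μ A = μ (A ∩ lmulSet (s * star s) A) := by
      have := (h (star s) A).1
      rwa [invsemi_star_star] at this
    rw [h4, ← h3, ← h2, ← h1]
end

section
/- Let S be a countable discrete inverse semigroup with identity 1 ∈ S and let μ be a finitely additive probability measure on S. Then μ is invariant (i.e., μ(A) = μ(s⁻¹A) for all s ∈ S, A ⊆ S) if and only if μ(A) = μ(s(A ∩ (s*s)A)) for all s ∈ S and A ⊆ S. -/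
/-- A finitely additive probability measure `μ` on a countable unital inverse semigroup is
invariant (`μ(A) = μ(s⁻¹A)` for all `s`, `A`) if and only if
`μ(A) = μ(s(A ∩ (s*s)A))` for all `s ∈ S` and `A ⊆ S`. -/
theorem statement6 (S : Type*) [Monoid S] [Star S] [IsInverseSemigroup S] [Countable S]
    (μ : Set S → ℝ) (hμ : IsFinAddProb μ) :
    (∀ (s : S) (A : Set S), μ A = μ {t | s * t ∈ A}) ↔
    (∀ (s : S) (A : Set S), μ A = μ (lmulSet s (A ∩ lmulSet (star s * s) A))) := by
  have hsss := IsInverseSemigroup.mul_star_mul_self (S := S)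
  have hsts := IsInverseSemigroup.star_mul_self_mul_star (S := S)
  constructor
  · intro hinv s A
    set e := star s * s with he
    have hse : s * e = s := by rw [he, ← mul_assoc, hsss]
    have hee : e * e = e := by
      rw [he, ← mul_assoc, hsts]
    -- key set identity : s⁻¹ (s (A ∩ eA)) = e⁻¹ A
    have hkey : {t | s * t ∈ lmulSet s (A ∩ lmulSet e A)} = {t | e * t ∈ A} := by
      ext t
      simp only [Set.mem_setOf_eq, lmulSet, Set.mem_image, Set.mem_inter_iff]
      constructor
      · rintro ⟨b, ⟨hbA, a, haA, hab⟩, hsb⟩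
        have h1 : e * t = e * b := by
          rw [he, mul_assoc, mul_assoc, hsb]
        have h2 : e * b = b := by rw [← hab, ← mul_assoc, hee]
        rw [h1, h2]; exact hbA
      · intro hA
        refine ⟨e * t, ⟨hA, e * t, hA, by rw [← mul_assoc, hee]⟩, ?_⟩
        rw [← mul_assoc, hse]
    calc μ A = μ {t | e * t ∈ A} := hinv e A
      _ = μ {t | s * t ∈ lmulSet s (A ∩ lmulSet e A)} := by rw [hkey]
      _ = μ (lmulSet s (A ∩ lmulSet e A)) := (hinv s _).symm
  · intro hcond s A
    set f := s * star s with hf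
    have hff : f * f = f := by
      rw [hf, ← mul_assoc, hsss]
    have hstarf : star f = f := (IsInverseSemigroup.star_unique f f (by rw [hff, hff]) (by rw [hff, hff])).symm
    have hsf : star s * f = star s := by rw [hf, ← mul_assoc, hsts]
    -- identity 1 : s (C ∩ eC) = A ∩ fA  where C = s⁻¹A, e = s* s
    have h1 : lmulSet s ({t | s * t ∈ A} ∩ lmulSet (star s * s) {t | s * t ∈ A})
        = A ∩ lmulSet f A := by
      ext u
      simp only [lmulSet, Set.mem_image, Set.mem_inter_iff, Set.mem_setOf_eq]
      constructor
      · rintro ⟨t, ⟨htA, c, hcA, hct⟩, htu⟩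
        have hst : s * t = s * c := by
          rw [← hct, ← mul_assoc, ← mul_assoc, hsss]
        refine ⟨htu ▸ htA, u, htu ▸ htA, ?_⟩
        rw [← htu, hf, ← mul_assoc, hsss]
      · rintro ⟨huA, a, hsa, hau⟩
        refine ⟨star s * u, ⟨?_, star s * u, ?_, ?_⟩, ?_⟩
        · show s * (star s * u) ∈ A
          rw [← mul_assoc, ← hf, ← hau, ← mul_assoc, hff, hau]; exact huA
        · show s * (star s * u) ∈ A
          rw [← mul_assoc, ← hf, ← hau, ← mul_assoc, hff, hau]; exact huA
        · rw [← mul_assoc, hsts]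
        · rw [← mul_assoc, ← hf, ← hau, ← mul_assoc, hff, hau]
    -- identity 2 : f (A ∩ fA) = A ∩ fA
    have h2 : lmulSet f (A ∩ lmulSet f A) = A ∩ lmulSet f A := by
      ext u
      simp only [lmulSet, Set.mem_image, Set.mem_inter_iff]
      constructor
      · rintro ⟨b, ⟨hbA, a, haA, hab⟩, hbu⟩
        have : f * b = b := by rw [← hab, ← mul_assoc, hff]
        rw [← hbu, this]
        exact ⟨hbA, a, haA, hab⟩
      · rintro ⟨huA, a, haA, hau⟩
        exact ⟨u, ⟨huA, a, haA, hau⟩, by rw [← hau, ← mul_assoc, hff]⟩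
    have hA : μ A = μ (A ∩ lmulSet f A) := by
      have := hcond f A
      rwa [hstarf, hff, h2] at this
    have hC := hcond s {t | s * t ∈ A}
    rw [h1, ← hA] at hC
    exact hC.symm
end

section
/- Let α be a representation of a unital inverse semigroup S on a set X and let A, B ⊆ X. If A is equidecomposable with some subset of B and B is equidecomposable with some subset of A, then A and B are equidecomposable. -/
open scoped ENNReal

/-- A representation of a unital inverse semigroup `S` on a set `X`: a unital semigroup
homomorphism into the inverse semigroup of partial bijections of `X` (encoded as `PEquiv`s)
compatible with the involution.  The domain of the partial bijection `α s` is `D_{s*s}` and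
its range is `D_{ss*}`; for an idempotent `e`, `D_e` is the domain of `α e`. -/
structure InverseSemigroupRep (S : Type*) [Monoid S] [Star S] (X : Type*) where
  α : S → X ≃. X
  map_one : α 1 = PEquiv.refl X
  map_star : ∀ s : S, α (star s) = (α s).symm
  map_mul : ∀ s t : S, α (s * t) = (α t).trans (α s)

/-- A finitely additive `[0,∞]`-valued measure on the power set of `X`. -/
def IsFinAddMeasure {X : Type*} (μ : Set X → ℝ≥0∞) : Prop :=
  μ (∅ : Set X) = 0 ∧ ∀ A B : Set X, Disjoint A B → μ (A ∪ B) = μ A + μ B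

namespace InverseSemigroupRep

variable {S X : Type*} [Monoid S] [Star S] (r : InverseSemigroupRep S X)

/-- The domain `D_{s*s}` of the partial bijection `α s`; for an idempotent `e`,
`r.dom e` is the set `D_e`. -/
def dom (s : S) : Set X := {x | ((r.α s) x).isSome}

/-- The image `α_s(B)` of a subset `B ⊆ X` under the partial bijection `α s`. -/
def im (s : S) (B : Set X) : Set X := {y | ∃ x ∈ B, (r.α s) x = some y}

/-- `A ⊆ X` is `S`-domain measurable: there is a finitely additive measure on `𝒫(X)`
normalized at `A` and invariant on domains. -/
def SDomainMeasurableSet (A : Set X) : Prop :=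
  ∃ μ : Set X → ℝ≥0∞, IsFinAddMeasure μ ∧ μ A = 1 ∧
    ∀ (s : S) (B : Set X), B ⊆ r.dom s → μ (r.im s B) = μ B

/-- `A ⊆ X` is `S`-amenable: there is a finitely additive measure on `𝒫(X)` normalized at
`A`, invariant on domains, and localized (`μ(B) = μ(B ∩ D_{t*t})` for all `t`). -/
def SAmenableSet (A : Set X) : Prop :=
  ∃ μ : Set X → ℝ≥0∞, IsFinAddMeasure μ ∧ μ A = 1 ∧
    (∀ (s : S) (B : Set X), B ⊆ r.dom s → μ (r.im s B) = μ B) ∧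
    (∀ (t : S) (B : Set X), μ B = μ (B ∩ r.dom t))

/-- `A ⊆ X` is `S`-paradoxical: `A` admits two disjoint families of pairwise disjoint
subsets, each contained in the appropriate domain, whose images partition `A` twice. -/
def SParadoxical (A : Set X) : Prop :=
  ∃ (n m : ℕ) (s : Fin n → S) (t : Fin m → S) (As : Fin n → Set X) (Bs : Fin m → Set X),
    (∀ i, As i ⊆ A) ∧ (∀ j, Bs j ⊆ A) ∧
    (∀ i, As i ⊆ r.dom (s i)) ∧ (∀ j, Bs j ⊆ r.dom (t j)) ∧
    (∀ i j, i ≠ j → Disjoint (As i) (As j)) ∧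
    (∀ i j, i ≠ j → Disjoint (Bs i) (Bs j)) ∧
    (∀ i j, Disjoint (As i) (Bs j)) ∧
    (∀ i j, i ≠ j → Disjoint (r.im (s i) (As i)) (r.im (s j) (As j))) ∧
    (∀ i j, i ≠ j → Disjoint (r.im (t i) (Bs i)) (r.im (t j) (Bs j))) ∧
    (⋃ i, r.im (s i) (As i)) = A ∧ (⋃ j, r.im (t j) (Bs j)) = A

/-- `A ⊆ X` is `S`-domain Følner: there is a sequence of finite non-empty subsets `F n ⊆ A`
with `|α_s(F n ∩ D_{s*s}) \ F n| / |F n| → 0` for every `s ∈ S`. -/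
def SDomainFolner (A : Set X) : Prop :=
  ∃ F : ℕ → Finset X, (∀ n, (F n).Nonempty) ∧ (∀ n, (F n : Set X) ⊆ A) ∧
    ∀ s : S, Filter.Tendsto
      (fun n => ((r.im s ((F n : Set X) ∩ r.dom s) \ (F n : Set X)).ncard : ℝ) / (F n).card)
      Filter.atTop (nhds 0)

end InverseSemigroupRep

namespace InverseSemigroupRep

variable {S X : Type*} [Monoid S] [Star S] (r : InverseSemigroupRep S X)

/-- `A` and `B` are equidecomposable: there are `s₁,…,s_n ∈ S` and a partition
`A = A₁ ⊔ ⋯ ⊔ A_n` with `A_i ⊆ D_{s_i* s_i}` and `B = α_{s₁}(A₁) ⊔ ⋯ ⊔ α_{s_n}(A_n)`. -/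
def Equidecomposable (A B : Set X) : Prop :=
  ∃ (n : ℕ) (s : Fin n → S) (As : Fin n → Set X),
    (∀ i, As i ⊆ r.dom (s i)) ∧
    (∀ i j, i ≠ j → Disjoint (As i) (As j)) ∧ (⋃ i, As i) = A ∧
    (∀ i j, i ≠ j → Disjoint (r.im (s i) (As i)) (r.im (s j) (As j))) ∧
    (⋃ i, r.im (s i) (As i)) = B

end InverseSemigroupRep


namespace InverseSemigroupRep

variable {S X : Type*} [Monoid S] [Star S] (r : InverseSemigroupRep S X)

lemma im_mono' (s : S) {C D : Set X} (h : C ⊆ D) : r.im s C ⊆ r.im s D := by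
  rintro y ⟨x, hx, hxy⟩; exact ⟨x, h hx, hxy⟩

lemma im_union' (s : S) (C D : Set X) : r.im s (C ∪ D) = r.im s C ∪ r.im s D := by
  ext y
  simp only [im, Set.mem_setOf_eq, Set.mem_union]
  constructor
  · rintro ⟨x, hx | hx, hxy⟩
    · exact Or.inl ⟨x, hx, hxy⟩
    · exact Or.inr ⟨x, hx, hxy⟩
  · rintro (⟨x, hx, hxy⟩ | ⟨x, hx, hxy⟩)
    · exact ⟨x, Or.inl hx, hxy⟩
    · exact ⟨x, Or.inr hx, hxy⟩

lemma im_iUnion' (s : S) (f : ℕ → Set X) : r.im s (⋃ k, f k) = ⋃ k, r.im s (f k) := by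
  ext y
  simp only [im, Set.mem_setOf_eq, Set.mem_iUnion]
  constructor
  · rintro ⟨x, ⟨k, hx⟩, hxy⟩
    exact ⟨k, x, hx, hxy⟩
  · rintro ⟨k, x, hx, hxy⟩
    exact ⟨x, ⟨k, hx⟩, hxy⟩

lemma im_disjoint' (s : S) {C D : Set X} (h : Disjoint C D) :
    Disjoint (r.im s C) (r.im s D) := by
  rw [Set.disjoint_left]
  rintro y ⟨x, hx, hxy⟩ ⟨x', hx', hxy'⟩
  have hxx : x = x' := (r.α s).inj hxy hxy'
  exact Set.disjoint_left.1 h hx (hxx ▸ hx')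

lemma im_subset_dom_star' (s : S) (C : Set X) : r.im s C ⊆ r.dom (star s) := by
  rintro y ⟨x, _, hxy⟩
  simp only [dom, Set.mem_setOf_eq, r.map_star]
  rw [(r.α s).eq_some_iff.2 hxy]; rfl

lemma im_star_im' (s : S) {C : Set X} (h : C ⊆ r.dom s) :
    r.im (star s) (r.im s C) = C := by
  ext y
  constructor
  · rintro ⟨x, ⟨c, hc, hcx⟩, hxy⟩
    rw [r.map_star] at hxy
    have h1 : (r.α s) y = some x := (r.α s).eq_some_iff.1 hxy
    have h2 := (r.α s).inj hcx h1
    exact h2 ▸ hc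
  · intro hy
    have h1 := h hy
    simp only [dom, Set.mem_setOf_eq, Option.isSome_iff_exists] at h1
    obtain ⟨x, hx⟩ := h1
    exact ⟨x, ⟨y, hy, hx⟩, by rw [r.map_star]; exact (r.α s).eq_some_iff.2 hx⟩

lemma equid_symm' {A B : Set X} (h : r.Equidecomposable A B) : r.Equidecomposable B A := by
  obtain ⟨n, s, As, hdom, hdisj, hU, hidisj, hiU⟩ := h
  refine ⟨n, fun i => star (s i), fun i => r.im (s i) (As i), ?_, hidisj, hiU, ?_, ?_⟩
  · exact fun i => r.im_subset_dom_star' (s i) (As i)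
  · intro i j hij
    rw [r.im_star_im' (s i) (hdom i), r.im_star_im' (s j) (hdom j)]
    exact hdisj i j hij
  · rw [← hU]
    exact Set.iUnion_congr fun i => r.im_star_im' (s i) (hdom i)

lemma iUnion_addCases' {n m : ℕ} (F : Fin n → Set X) (G : Fin m → Set X) :
    (⋃ i : Fin (n + m), Fin.addCases (motive := fun _ => Set X) F G i) =
      (⋃ i, F i) ∪ (⋃ j, G j) := by
  ext x
  simp only [Set.mem_iUnion, Set.mem_union]
  constructor
  · rintro ⟨i, hi⟩
    induction i using Fin.addCases with
    | left i => left; exact ⟨i, by simpa using hi⟩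
    | right j => right; exact ⟨j, by simpa using hi⟩
  · rintro (⟨i, hi⟩ | ⟨j, hj⟩)
    · exact ⟨Fin.castAdd m i, by simpa using hi⟩
    · exact ⟨Fin.natAdd n j, by simpa using hj⟩

lemma equid_union' {A₁ B₁ A₂ B₂ : Set X} (h₁ : r.Equidecomposable A₁ B₁)
    (h₂ : r.Equidecomposable A₂ B₂) (hA : Disjoint A₁ A₂) (hB : Disjoint B₁ B₂) :
    r.Equidecomposable (A₁ ∪ A₂) (B₁ ∪ B₂) := by
  obtain ⟨n, s₁, As₁, hdom₁, hdisj₁, hU₁, hidisj₁, hiU₁⟩ := h₁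
  obtain ⟨m, s₂, As₂, hdom₂, hdisj₂, hU₂, hidisj₂, hiU₂⟩ := h₂
  have hsubA₁ : ∀ i, As₁ i ⊆ A₁ := fun i => hU₁ ▸ Set.subset_iUnion As₁ i
  have hsubA₂ : ∀ j, As₂ j ⊆ A₂ := fun j => hU₂ ▸ Set.subset_iUnion As₂ j
  have hsubB₁ : ∀ i, r.im (s₁ i) (As₁ i) ⊆ B₁ :=
    fun i => hiU₁ ▸ Set.subset_iUnion (fun i => r.im (s₁ i) (As₁ i)) i
  have hsubB₂ : ∀ j, r.im (s₂ j) (As₂ j) ⊆ B₂ :=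
    fun j => hiU₂ ▸ Set.subset_iUnion (fun j => r.im (s₂ j) (As₂ j)) j
  refine ⟨n + m, Fin.addCases s₁ s₂, Fin.addCases As₁ As₂, ?_, ?_, ?_, ?_, ?_⟩
  · intro i
    induction i using Fin.addCases with
    | left i => simpa using hdom₁ i
    | right j => simpa using hdom₂ j
  · intro i j hij
    induction i using Fin.addCases with
    | left i =>
      induction j using Fin.addCases with
      | left j =>
        simp only [Fin.addCases_left]
        exact hdisj₁ i j (fun h => hij (congrArg _ h))
      | right j =>
        simp only [Fin.addCases_left, Fin.addCases_right]
        exact hA.mono (hsubA₁ i) (hsubA₂ j)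
    | right i =>
      induction j using Fin.addCases with
      | left j =>
        simp only [Fin.addCases_left, Fin.addCases_right]
        exact (hA.mono (hsubA₁ j) (hsubA₂ i)).symm
      | right j =>
        simp only [Fin.addCases_right]
        exact hdisj₂ i j (fun h => hij (congrArg _ h))
  · have := iUnion_addCases' As₁ As₂
    rw [show (Fin.addCases As₁ As₂ : Fin (n+m) → Set X)
        = fun i => Fin.addCases (motive := fun _ => Set X) As₁ As₂ i from rfl]
    rw [this, hU₁, hU₂]
  · intro i j hij
    induction i using Fin.addCases with
    | left i =>
      induction j using Fin.addCases with
      | left j =>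
        simp only [Fin.addCases_left]
        exact hidisj₁ i j (fun h => hij (congrArg _ h))
      | right j =>
        simp only [Fin.addCases_left, Fin.addCases_right]
        exact hB.mono (hsubB₁ i) (hsubB₂ j)
    | right i =>
      induction j using Fin.addCases with
      | left j =>
        simp only [Fin.addCases_left, Fin.addCases_right]
        exact (hB.mono (hsubB₁ j) (hsubB₂ i)).symm
      | right j =>
        simp only [Fin.addCases_right]
        exact hidisj₂ i j (fun h => hij (congrArg _ h))
  · have key : (fun i : Fin (n+m) =>
        r.im (Fin.addCases s₁ s₂ i) (Fin.addCases (motive := fun _ => Set X) As₁ As₂ i))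
        = fun i => Fin.addCases (motive := fun _ => Set X)
            (fun i => r.im (s₁ i) (As₁ i)) (fun j => r.im (s₂ j) (As₂ j)) i := by
      funext i
      induction i using Fin.addCases with
      | left i => simp
      | right j => simp
    rw [show (⋃ i, r.im (Fin.addCases s₁ s₂ i) (Fin.addCases As₁ As₂ i))
        = ⋃ i, (fun i : Fin (n+m) => r.im (Fin.addCases s₁ s₂ i)
            (Fin.addCases (motive := fun _ => Set X) As₁ As₂ i)) i from rfl, key,
      iUnion_addCases', hiU₁, hiU₂]

/-- The piecewise image map of an equidecomposition, with all its properties. -/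
lemma equid_map' {A B : Set X} (h : r.Equidecomposable A B) :
    ∃ Φ : Set X → Set X,
      (∀ C, Φ C ⊆ B) ∧ Φ A = B ∧
      (∀ C, C ⊆ A → r.Equidecomposable C (Φ C)) ∧
      (∀ f : ℕ → Set X, Φ (⋃ k, f k) = ⋃ k, Φ (f k)) ∧
      (∀ C D : Set X, Disjoint C D → Disjoint (Φ C) (Φ D)) ∧
      (∀ C D : Set X, Φ (C ∪ D) = Φ C ∪ Φ D) := by
  obtain ⟨n, s, As, hdom, hdisj, hU, hidisj, hiU⟩ := h
  set Φ : Set X → Set X := fun C => ⋃ i, r.im (s i) (As i ∩ C) with hΦ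
  have hsub : ∀ C, Φ C ⊆ B := by
    intro C
    rw [← hiU]
    exact Set.iUnion_mono fun i => r.im_mono' (s i) Set.inter_subset_left
  refine ⟨Φ, hsub, ?_, ?_, ?_, ?_, ?_⟩
  · rw [hΦ, ← hiU]
    exact Set.iUnion_congr fun i =>
      congrArg _ (Set.inter_eq_left.2 (hU ▸ Set.subset_iUnion As i))
  · intro C hC
    refine ⟨n, s, fun i => As i ∩ C, ?_, ?_, ?_, ?_, rfl⟩
    · exact fun i => Set.inter_subset_left.trans (hdom i)
    · exact fun i j hij => (hdisj i j hij).mono Set.inter_subset_left Set.inter_subset_left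
    · rw [← Set.iUnion_inter, hU]
      exact Set.inter_eq_right.2 hC
    · exact fun i j hij => (hidisj i j hij).mono
        (r.im_mono' (s i) Set.inter_subset_left) (r.im_mono' (s j) Set.inter_subset_left)
  · intro f
    rw [hΦ]
    simp only [Set.inter_iUnion, im_iUnion']
    exact Set.iUnion_comm fun i k => r.im (s i) (As i ∩ f k)
  · intro C D hCD
    rw [Set.disjoint_iUnion_left]
    intro i
    rw [Set.disjoint_iUnion_right]
    intro j
    rcases eq_or_ne i j with rfl | hij
    · exact r.im_disjoint' (s i) (hCD.mono Set.inter_subset_right Set.inter_subset_right)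
    · exact (hidisj i j hij).mono
        (r.im_mono' (s i) Set.inter_subset_left) (r.im_mono' (s j) Set.inter_subset_left)
  · intro C D
    rw [hΦ, ← Set.iUnion_union_distrib]
    exact Set.iUnion_congr fun i => by
      rw [Set.inter_union_distrib_left, im_union']

end InverseSemigroupRep

/-- If `A` is equidecomposable with a subset of `B` and `B` is equidecomposable with a
subset of `A`, then `A` and `B` are equidecomposable. -/
theorem statement7 {S X : Type*} [Monoid S] [Star S] [IsInverseSemigroup S]
    (r : InverseSemigroupRep S X) (A B : Set X)
    (h1 : ∃ B' : Set X, B' ⊆ B ∧ r.Equidecomposable A B')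
    (h2 : ∃ A' : Set X, A' ⊆ A ∧ r.Equidecomposable B A') :
    r.Equidecomposable A B := by
  obtain ⟨B', hB'B, hAB'⟩ := h1
  obtain ⟨A', hA'A, hBA'⟩ := h2
  obtain ⟨Φ, hΦsub, hΦA, hΦrestrict, hΦiUnion, hΦdisj, hΦunion⟩ := r.equid_map' hAB'
  obtain ⟨Ψ, hΨsub, hΨB, hΨrestrict, hΨiUnion, hΨdisj, hΨunion⟩ := r.equid_map' hBA'
  set g : Set X → Set X := fun C => Ψ (Φ C) with hg
  set C₀ : Set X := ⋃ k, g^[k] (A \ A') with hC₀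
  have hC₀A : C₀ ⊆ A := by
    rw [hC₀]
    refine Set.iUnion_subset fun k => ?_
    cases k with
    | zero => simpa using Set.diff_subset
    | succ k =>
      rw [Function.iterate_succ_apply']
      exact ((hΨsub _).trans hA'A)
  have hrec : C₀ = (A \ A') ∪ g C₀ := by
    have h1 : g C₀ = ⋃ k, g^[k + 1] (A \ A') := by
      rw [hC₀, hg]
      simp only [hΦiUnion, hΨiUnion]
      exact Set.iUnion_congr fun k => (Function.iterate_succ_apply' g k (A \ A')).symm
    rw [h1, hC₀]
    ext x
    simp only [Set.mem_iUnion, Set.mem_union]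
    constructor
    · rintro ⟨k, hk⟩
      cases k with
      | zero => exact Or.inl (by simpa using hk)
      | succ k => exact Or.inr ⟨k, hk⟩
    · rintro (hx | ⟨k, hk⟩)
      · exact ⟨0, by simpa using hx⟩
      · exact ⟨k + 1, hk⟩
  have hAC₀ : A \ C₀ = A' \ g C₀ := by
    conv_lhs => rw [hrec]
    ext x
    have hx := @hA'A x
    simp only [Set.mem_diff, Set.mem_union, not_or, not_and, not_not]
    tauto
  have hΨcomp : Ψ (B \ Φ C₀) = A' \ g C₀ := by
    have hsplit : Φ C₀ ∪ (B \ Φ C₀) = B := Set.union_diff_cancel (hΦsub C₀ |>.trans hB'B)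
    have hdisjsplit : Disjoint (Φ C₀) (B \ Φ C₀) := Set.disjoint_sdiff_right
    have h2 : Ψ (Φ C₀) ∪ Ψ (B \ Φ C₀) = A' := by
      rw [← hΨunion, hsplit, hΨB]
    have h3 : Disjoint (Ψ (Φ C₀)) (Ψ (B \ Φ C₀)) := hΨdisj _ _ hdisjsplit
    rw [hg]
    rw [← h2, Set.union_diff_left, h3.symm.sdiff_eq_left]
  have e1 : r.Equidecomposable C₀ (Φ C₀) := hΦrestrict C₀ hC₀A
  have e2 : r.Equidecomposable (B \ Φ C₀) (A \ C₀) := by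
    rw [hAC₀, ← hΨcomp]
    exact hΨrestrict _ Set.diff_subset
  have e2' := r.equid_symm' e2
  have := r.equid_union' e1 e2' Set.disjoint_sdiff_right
    (Set.disjoint_sdiff_right)
  rwa [Set.union_diff_cancel hC₀A, Set.union_diff_cancel ((hΦsub C₀).trans hB'B)] at this
end

section
/- Let S be a countable discrete inverse semigroup with identity 1 ∈ S and let α be a representation of S on a set X. Then the following are equivalent: (1) X is S-domain measurable; (2) X is not S-paradoxical; (3) X is S-domain Følner. -/
open scoped ENNReal

namespace ISRAux

open InverseSemigroupRep

variable {S X : Type*} [Monoid S] [Star S] (r : InverseSemigroupRep S X)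

theorem alpha_inj {s : S} {x x' y : X} (h : r.α s x = some y) (h' : r.α s x' = some y) :
    x = x' := by
  have h1 : x ∈ (r.α s).symm y := (PEquiv.mem_iff_mem (r.α s)).mpr h
  have h2 : x' ∈ (r.α s).symm y := (PEquiv.mem_iff_mem (r.α s)).mpr h'
  rw [Option.mem_def] at h1 h2
  rw [h1] at h2; exact Option.some.inj h2

theorem star_apply {s : S} {x y : X} (h : r.α s x = some y) :
    r.α (star s) y = some x := by
  rw [r.map_star]
  exact (PEquiv.mem_iff_mem (r.α s)).mpr h

theorem mem_dom_of_some {s : S} {x y : X} (h : r.α s x = some y) : x ∈ r.dom s := by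
  simp [InverseSemigroupRep.dom, h]

theorem exists_some_of_mem_dom {s : S} {x : X} (h : x ∈ r.dom s) :
    ∃ y, r.α s x = some y := Option.isSome_iff_exists.mp h

theorem mem_im {s : S} {B : Set X} {y : X} :
    y ∈ r.im s B ↔ ∃ x ∈ B, r.α s x = some y := Iff.rfl

theorem im_star_im {s : S} {B : Set X} (hB : B ⊆ r.dom s) :
    r.im (star s) (r.im s B) = B := by
  ext x
  constructor
  · rintro ⟨y, ⟨x', hx'B, hx'⟩, hy⟩
    have : r.α (star s) y = some x' := star_apply r hx'
    rw [this] at hy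
    rwa [← Option.some.inj hy]
  · intro hx
    obtain ⟨y, hy⟩ := exists_some_of_mem_dom r (hB hx)
    exact ⟨y, ⟨x, hx, hy⟩, star_apply r hy⟩

theorem alpha_one (x : X) : r.α 1 x = some x := by
  rw [r.map_one]; rfl

theorem im_one (B : Set X) : r.im 1 B = B := by
  ext y
  simp only [mem_im]
  constructor
  · rintro ⟨x, hx, h⟩
    rw [alpha_one r] at h
    rwa [← Option.some.inj h]
  · intro hy; exact ⟨y, hy, alpha_one r y⟩

end ISRAux
namespace ISRAux

open InverseSemigroupRep Finset

variable {S X : Type*} [Monoid S] [Star S] (r : InverseSemigroupRep S X) [DecidableEq X]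

/-- Finset version of the image of `F ∩ dom s` under `α s`. -/
def fim (s : S) (F : Finset X) : Finset X := F.biUnion (fun x => (r.α s x).toFinset)

theorem mem_fim {s : S} {F : Finset X} {y : X} :
    y ∈ fim r s F ↔ ∃ x ∈ F, r.α s x = some y := by
  simp [fim, Option.mem_toFinset, Option.mem_def]

theorem coe_fim (s : S) (F : Finset X) :
    (fim r s F : Set X) = r.im s ((F : Set X) ∩ r.dom s) := by
  ext y
  simp only [Finset.mem_coe, mem_fim, mem_im]
  constructor
  · rintro ⟨x, hx, h⟩
    exact ⟨x, ⟨hx, mem_dom_of_some r h⟩, h⟩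
  · rintro ⟨x, ⟨hx, _⟩, h⟩
    exact ⟨x, hx, h⟩

theorem fim_mono {s : S} {F G : Finset X} (h : F ⊆ G) : fim r s F ⊆ fim r s G := by
  intro y hy
  rw [mem_fim] at hy ⊢
  obtain ⟨x, hx, hxy⟩ := hy
  exact ⟨x, h hx, hxy⟩

theorem card_fim_of_subset_dom {s : S} {F : Finset X} (h : (F : Set X) ⊆ r.dom s) :
    (fim r s F).card = F.card := by
  rw [fim, Finset.card_biUnion]
  · rw [Finset.card_eq_sum_ones F]
    apply Finset.sum_congr rfl
    intro x hx
    obtain ⟨y, hy⟩ := exists_some_of_mem_dom r (h hx)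
    simp [hy]
  · intro x _ x' _ hxx'
    rw [Function.onFun, Finset.disjoint_left]
    intro y hy hy'
    rw [Option.mem_toFinset, Option.mem_def] at hy hy'
    exact hxx' (alpha_inj r hy hy')

theorem fim_one (F : Finset X) : fim r 1 F = F := by
  ext y
  rw [mem_fim]
  constructor
  · rintro ⟨x, hx, h⟩
    rw [alpha_one] at h
    rwa [← Option.some.inj h]
  · intro hy; exact ⟨y, hy, alpha_one r y⟩

theorem fim_fim {s t : S} (F : Finset X) : fim r s (fim r t F) ⊆ fim r (s * t) F := by
  intro y hy
  rw [mem_fim] at hy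
  obtain ⟨z, hz, hzy⟩ := hy
  rw [mem_fim] at hz
  obtain ⟨x, hx, hxz⟩ := hz
  rw [mem_fim]
  refine ⟨x, hx, ?_⟩
  rw [r.map_mul]
  show ((r.α t).trans (r.α s)) x = some y
  have : ((r.α t).trans (r.α s)) x = (r.α t x).bind (r.α s) := rfl
  rw [this, hxz]; exact hzy

open Classical in
/-- The key counting inequality. -/
theorem filter_card_le {s : S} {B : Set X} (hB : B ⊆ r.dom s) (F : Finset X) :
    (F.filter (fun x => x ∈ B)).card ≤
      (F.filter (fun y => y ∈ r.im s B)).card + (fim r s F \ F).card := by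
  classical
  set G := F.filter (fun x => x ∈ B) with hG
  have hGdom : (G : Set X) ⊆ r.dom s := by
    intro x hx
    rw [Finset.mem_coe, hG, Finset.mem_filter] at hx
    exact hB hx.2
  have hcard : (fim r s G).card = G.card := card_fim_of_subset_dom r hGdom
  have hsplit : fim r s G ⊆ (F.filter (fun y => y ∈ r.im s B)) ∪ (fim r s F \ F) := by
    intro y hy
    rw [mem_fim] at hy
    obtain ⟨x, hx, hxy⟩ := hy
    rw [hG, Finset.mem_filter] at hx
    by_cases hyF : y ∈ F
    · apply Finset.mem_union_left
      rw [Finset.mem_filter]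
      exact ⟨hyF, x, hx.2, hxy⟩
    · apply Finset.mem_union_right
      rw [Finset.mem_sdiff]
      refine ⟨?_, hyF⟩
      rw [mem_fim]
      exact ⟨x, hx.1, hxy⟩
  calc G.card = (fim r s G).card := hcard.symm
    _ ≤ ((F.filter (fun y => y ∈ r.im s B)) ∪ (fim r s F \ F)).card :=
        Finset.card_le_card hsplit
    _ ≤ _ := Finset.card_union_le _ _

end ISRAux

namespace ISRAux
variable {S X : Type*} [Monoid S] [Star S] (r : InverseSemigroupRep S X) [DecidableEq X]

theorem ncard_eq_fim (s : S) (F : Finset X) :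
    (r.im s ((F : Set X) ∩ r.dom s) \ (F : Set X)).ncard = (fim r s F \ F).card := by
  have he : r.im s ((F : Set X) ∩ r.dom s) \ (F : Set X)
      = ((fim r s F \ F : Finset X) : Set X) := by
    rw [Finset.coe_sdiff, coe_fim]
  rw [he, Set.ncard_coe_finset]

end ISRAux
namespace ISRAux

open InverseSemigroupRep Finset Filter

variable {S X : Type*} [Monoid S] [Star S] (r : InverseSemigroupRep S X)

open Classical in
theorem folner_implies_measurable (h : r.SDomainFolner (Set.univ : Set X)) :
    r.SDomainMeasurableSet (Set.univ : Set X) := by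
  classical
  obtain ⟨F, hne, -, hF⟩ := h
  -- the normalized counting functions
  set q : Set X → ℕ → ℝ :=
    fun B n => (((F n : Set X) ∩ B).ncard : ℝ) / ((F n).card : ℝ) with hq
  have hcardpos : ∀ n, (0:ℝ) < ((F n).card : ℝ) := by
    intro n
    exact_mod_cast Finset.card_pos.mpr (hne n)
  have hqf : ∀ (B : Set X) (n : ℕ),
      ((F n : Set X) ∩ B).ncard = ((F n).filter (fun x => x ∈ B)).card := by
    intro B n
    rw [← Set.ncard_coe_finset ((F n).filter (fun x => x ∈ B))]
    congr 1
    ext x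
    simp [Finset.mem_coe, Finset.mem_filter]
  have hfin : ∀ (B : Set X) (n : ℕ), ((F n : Set X) ∩ B).Finite :=
    fun B n => (F n).finite_toSet.inter_of_left B
  have hq01 : ∀ B n, q B n ∈ Set.Icc (0:ℝ) 1 := by
    intro B n
    constructor
    · positivity
    · rw [hq]
      simp only
      rw [div_le_one (hcardpos n)]
      have : ((F n : Set X) ∩ B).ncard ≤ (F n).card := by
        rw [← Set.ncard_coe_finset (F n)]
        exact Set.ncard_le_ncard Set.inter_subset_left (F n).finite_toSet
      exact_mod_cast this
  -- ultrafilter extending atTop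
  let U : Ultrafilter ℕ := Ultrafilter.of atTop
  have hU : (U : Filter ℕ) ≤ atTop := Ultrafilter.of_le _
  -- limits along U
  have hlim : ∀ B : Set X, ∃ c ∈ Set.Icc (0:ℝ) 1, Tendsto (q B) U (nhds c) := by
    intro B
    obtain ⟨c, hc, hc2⟩ := (isCompact_Icc (a := (0:ℝ)) (b := 1)).ultrafilter_le_nhds
      (U.map (q B)) (by
        rw [Ultrafilter.coe_map]
        refine le_principal_iff.mpr ?_
        exact Filter.mem_map.mpr (Filter.univ_mem' (fun n => hq01 B n)))
    refine ⟨c, hc, ?_⟩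
    simpa [Filter.Tendsto, Ultrafilter.coe_map] using hc2
  choose c hc01 hctend using hlim
  have huniq : ∀ (B : Set X) (a : ℝ), Tendsto (q B) U (nhds a) → c B = a := by
    intro B a ha
    exact tendsto_nhds_unique (hctend B) ha
  -- the measure
  refine ⟨fun B => ENNReal.ofReal (c B), ⟨?_, ?_⟩, ?_, ?_⟩
  · -- empty
    have h0 : c (∅ : Set X) = 0 := by
      apply huniq
      have he : q (∅ : Set X) = fun _ => 0 := by
        funext n; simp [hq]
      rw [he]
      exact tendsto_const_nhds
    simp [h0]
  · -- additivity
    intro A B hAB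
    have hsum : ∀ n, q (A ∪ B) n = q A n + q B n := by
      intro n
      have hsplit : (F n : Set X) ∩ (A ∪ B) = ((F n : Set X) ∩ A) ∪ ((F n : Set X) ∩ B) :=
        Set.inter_union_distrib_left _ _ _
      have hdisj : Disjoint ((F n : Set X) ∩ A) ((F n : Set X) ∩ B) :=
        hAB.mono Set.inter_subset_right Set.inter_subset_right
      have hcard : ((F n : Set X) ∩ (A ∪ B)).ncard
          = ((F n : Set X) ∩ A).ncard + ((F n : Set X) ∩ B).ncard := by
        rw [hsplit]
        exact Set.ncard_union_eq hdisj (hfin A n) (hfin B n)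
      rw [hq]
      simp only
      rw [hcard]
      push_cast
      ring
    have hc : c (A ∪ B) = c A + c B := by
      apply huniq
      have he : q (A ∪ B) = fun n => q A n + q B n := funext hsum
      rw [he]
      exact Tendsto.add (hctend A) (hctend B)
    show ENNReal.ofReal (c (A ∪ B)) = ENNReal.ofReal (c A) + ENNReal.ofReal (c B)
    rw [hc, ENNReal.ofReal_add (hc01 A).1 (hc01 B).1]
  · -- μ univ = 1
    have h1 : c (Set.univ : Set X) = 1 := by
      apply huniq
      have he : q (Set.univ : Set X) = fun _ => 1 := by
        funext n
        rw [hq]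
        simp only [Set.inter_univ, Set.ncard_coe_finset]
        exact div_self (ne_of_gt (hcardpos n))
      rw [he]
      exact tendsto_const_nhds
    simp [h1]
  · -- invariance
    intro s B hB
    have key : ∀ n, |q (r.im s B) n - q B n| ≤
        (((fim r s (F n) \ F n).card : ℝ) + ((fim r (star s) (F n) \ F n).card : ℝ))
          / ((F n).card : ℝ) := by
      intro n
      have h1 := filter_card_le r hB (F n)
      have hB' : r.im s B ⊆ r.dom (star s) := by
        rintro y ⟨x, hx, hxy⟩
        exact mem_dom_of_some r (star_apply r hxy)
      have h2' := filter_card_le r hB' (F n)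
      rw [im_star_im r hB] at h2'
      have h1R : (((F n).filter (fun x => x ∈ B)).card : ℝ) ≤
          ((F n).filter (fun y => y ∈ r.im s B)).card + ((fim r s (F n) \ F n).card : ℝ) := by
        exact_mod_cast h1
      have h2R : (((F n).filter (fun x => x ∈ r.im s B)).card : ℝ) ≤
          ((F n).filter (fun y => y ∈ B)).card + ((fim r (star s) (F n) \ F n).card : ℝ) := by
        exact_mod_cast h2'
      have hqe : q (r.im s B) n - q B n =
          ((((F n).filter (fun x => x ∈ r.im s B)).card : ℝ)
            - (((F n).filter (fun x => x ∈ B)).card : ℝ)) / ((F n).card : ℝ) := by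
        rw [hq]
        simp only
        rw [hqf (r.im s B) n, hqf B n, div_sub_div_same]
      rw [hqe, abs_div, abs_of_pos (hcardpos n)]
      rw [div_le_div_iff_of_pos_right (hcardpos n)]
      rw [abs_sub_le_iff]
      have hd1 : (0:ℝ) ≤ ((fim r s (F n) \ F n).card : ℝ) := by positivity
      have hd2 : (0:ℝ) ≤ ((fim r (star s) (F n) \ F n).card : ℝ) := by positivity
      constructor <;> linarith
    -- the bound tends to 0 along atTop
    have hb : Tendsto (fun n =>
        (((fim r s (F n) \ F n).card : ℝ) + ((fim r (star s) (F n) \ F n).card : ℝ))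
          / ((F n).card : ℝ)) atTop (nhds 0) := by
      have hconv : ∀ t : S, (fun n => ((fim r t (F n) \ F n).card : ℝ) / ((F n).card : ℝ))
          = fun n => ((r.im t ((F n : Set X) ∩ r.dom t) \ (F n : Set X)).ncard : ℝ)
            / ((F n).card : ℝ) := by
        intro t
        funext n
        congr 2
        have he : r.im t ((F n : Set X) ∩ r.dom t) \ (F n : Set X)
            = ((fim r t (F n) \ F n : Finset X) : Set X) := by
          rw [Finset.coe_sdiff, coe_fim]
        rw [he, Set.ncard_coe_finset]
      have h1 := hF s
      have h2 := hF (star s)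
      rw [← hconv s] at h1
      rw [← hconv (star s)] at h2
      have h3 := h1.add h2
      rw [add_zero] at h3
      convert h3 using 2 with n
      rw [← add_div]
    have hbU : Tendsto (fun n =>
        (((fim r s (F n) \ F n).card : ℝ) + ((fim r (star s) (F n) \ F n).card : ℝ))
          / ((F n).card : ℝ)) U (nhds 0) := hb.mono_left hU
    have hdiff : Tendsto (fun n => q (r.im s B) n - q B n) U (nhds 0) :=
      squeeze_zero_norm (fun n => key n) hbU
    have htend : Tendsto (q (r.im s B)) U (nhds (c B)) := by
      have he : q (r.im s B) = fun n => (q (r.im s B) n - q B n) + q B n := by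
        funext n; ring
      rw [he]
      have h4 := hdiff.add (hctend B)
      rwa [zero_add] at h4
    show ENNReal.ofReal (c (r.im s B)) = ENNReal.ofReal (c B)
    rw [huniq _ _ htend]

end ISRAux
namespace ISRAux

open InverseSemigroupRep

variable {S X : Type*} [Monoid S] [Star S] (r : InverseSemigroupRep S X)

theorem mu_mono {μ : Set X → ℝ≥0∞} (hμ : IsFinAddMeasure μ) {A B : Set X} (h : A ⊆ B) :
    μ A ≤ μ B := by
  have := hμ.2 A (B \ A) Set.disjoint_sdiff_right
  rw [Set.union_diff_cancel h] at this
  rw [this]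
  exact le_self_add

theorem mu_iUnion {μ : Set X → ℝ≥0∞} (hμ : IsFinAddMeasure μ) :
    ∀ (n : ℕ) (f : Fin n → Set X), (∀ i j, i ≠ j → Disjoint (f i) (f j)) →
      μ (⋃ i, f i) = ∑ i, μ (f i) := by
  intro n
  induction n with
  | zero =>
    intro f _
    simp [Set.iUnion_of_empty, hμ.1]
  | succ n ih =>
    intro f hdisj
    have hsplit : (⋃ i, f i) = f 0 ∪ ⋃ i : Fin n, f i.succ := by
      ext x
      simp only [Set.mem_iUnion, Set.mem_union]
      constructor
      · rintro ⟨i, hi⟩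
        rcases Fin.eq_zero_or_eq_succ i with h0 | ⟨j, hj⟩
        · left; rwa [h0] at hi
        · right; exact ⟨j, by rwa [hj] at hi⟩
      · rintro (h0 | ⟨j, hj⟩)
        · exact ⟨0, h0⟩
        · exact ⟨j.succ, hj⟩
    have hd : Disjoint (f 0) (⋃ i : Fin n, f i.succ) := by
      rw [Set.disjoint_iUnion_right]
      intro i
      exact hdisj 0 i.succ (Fin.succ_ne_zero i).symm
    rw [hsplit, hμ.2 _ _ hd, ih (fun i => f i.succ)
      (fun i j hij => hdisj i.succ j.succ (fun h => hij (Fin.succ_injective n h))),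
      Fin.sum_univ_succ]

theorem measurable_implies_not_paradoxical
    (h : r.SDomainMeasurableSet (Set.univ : Set X)) :
    ¬ r.SParadoxical (Set.univ : Set X) := by
  obtain ⟨μ, hμ, hμ1, hμinv⟩ := h
  rintro ⟨n, m, s, t, As, Bs, -, -, hAdom, hBdom, hAdisj, hBdisj, hABdisj,
    hImA, hImB, hUA, hUB⟩
  have hA1 : μ (⋃ i, As i) = 1 := by
    have e1 : μ (⋃ i, As i) = ∑ i, μ (As i) := mu_iUnion hμ n As hAdisj
    have e2 : μ (⋃ i, r.im (s i) (As i)) = ∑ i, μ (r.im (s i) (As i)) :=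
      mu_iUnion hμ n _ hImA
    have e3 : ∀ i, μ (r.im (s i) (As i)) = μ (As i) := fun i => hμinv (s i) (As i) (hAdom i)
    rw [hUA, hμ1] at e2
    rw [e1, e2]
    exact Finset.sum_congr rfl (fun i _ => (e3 i).symm)
  have hB1 : μ (⋃ j, Bs j) = 1 := by
    have e1 : μ (⋃ j, Bs j) = ∑ j, μ (Bs j) := mu_iUnion hμ m Bs hBdisj
    have e2 : μ (⋃ j, r.im (t j) (Bs j)) = ∑ j, μ (r.im (t j) (Bs j)) :=
      mu_iUnion hμ m _ hImB
    have e3 : ∀ j, μ (r.im (t j) (Bs j)) = μ (Bs j) := fun j => hμinv (t j) (Bs j) (hBdom j)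
    rw [hUB, hμ1] at e2
    rw [e1, e2]
    exact Finset.sum_congr rfl (fun j _ => (e3 j).symm)
  have hd : Disjoint (⋃ i, As i) (⋃ j, Bs j) := by
    rw [Set.disjoint_iUnion_right]
    intro j
    rw [Set.disjoint_iUnion_left]
    intro i
    exact hABdisj i j
  have h2 : μ ((⋃ i, As i) ∪ ⋃ j, Bs j) = 2 := by
    rw [hμ.2 _ _ hd, hA1, hB1]
    norm_num
  have hle : μ ((⋃ i, As i) ∪ ⋃ j, Bs j) ≤ μ (Set.univ : Set X) :=
    mu_mono hμ (Set.subset_univ _)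
  rw [h2, hμ1] at hle
  exact (by norm_num : ¬ ((2:ℝ≥0∞) ≤ 1)) hle

end ISRAux
namespace ISRAux

open InverseSemigroupRep Finset Filter

variable {S X : Type*} [Monoid S] [Star S] (r : InverseSemigroupRep S X) [DecidableEq X]

theorem not_folner_expansion [Countable S] (h : ¬ r.SDomainFolner (Set.univ : Set X)) :
    ∃ (N : ℕ) (e : ℕ → S) (ε : ℝ), 0 < ε ∧ Function.Surjective e ∧
      ∀ F : Finset X, F.Nonempty →
        ∃ k ≤ N, ε * F.card ≤ ((fim r (e k) F \ F).card : ℝ) := by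
  have : Nonempty S := ⟨1⟩
  obtain ⟨e, he⟩ := exists_surjective_nat S
  by_contra hcon
  push_neg at hcon
  apply h
  -- for each N there is a good Følner-ish set
  have hgood : ∀ N : ℕ, ∃ F : Finset X, F.Nonempty ∧
      ∀ k ≤ N, ((fim r (e k) F \ F).card : ℝ) < (1 / (N + 1)) * F.card := by
    intro N
    obtain ⟨F, hFne, hF⟩ := hcon N e (1 / (N + 1)) (by positivity) he
    exact ⟨F, hFne, fun k hk => by
      have := hF k hk
      linarith⟩
  choose F hFne hFbd using hgood
  refine ⟨F, hFne, fun n => Set.subset_univ _, ?_⟩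
  intro s
  obtain ⟨k, rfl⟩ := he s
  have hcardpos : ∀ n, (0:ℝ) < ((F n).card : ℝ) := by
    intro n
    exact_mod_cast Finset.card_pos.mpr (hFne n)
  refine squeeze_zero' ?_ ?_ tendsto_one_div_add_atTop_nhds_zero_nat
  · filter_upwards with n
    have := ncard_eq_fim r (e k) (F n)
    positivity
  · filter_upwards [Filter.eventually_ge_atTop k] with n hn
    rw [ncard_eq_fim r (e k) (F n), div_le_iff₀ (hcardpos n)]
    have h1 := hFbd n k hn
    have h2 : (1 / ((n:ℝ) + 1)) * (F n).card ≤ (1 / ((n:ℝ) + 1)) * (F n).card := le_refl _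
    calc ((fim r (e k) (F n) \ F n).card : ℝ) ≤ (1 / ((n:ℝ) + 1)) * (F n).card := h1.le
      _ = 1 / ((n:ℝ) + 1) * (F n).card := rfl

end ISRAux
namespace ISRAux

open InverseSemigroupRep Finset Filter

variable {S X : Type*} [Monoid S] [Star S] (r : InverseSemigroupRep S X) [DecidableEq X]

theorem doubling [Countable S] (h : ¬ r.SDomainFolner (Set.univ : Set X)) :
    ∃ (J : ℕ) (P : Fin J → S), ∀ F : Finset X,
      2 * F.card ≤ (Finset.univ.biUnion (fun i : Fin J => fim r (P i) F)).card := by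
  classical
  obtain ⟨N, e, ε, hε, -, hexp⟩ := not_folner_expansion r h
  set A : Fin (N + 2) → S := fun k => if k.val = 0 then 1 else e (k.val - 1) with hA
  set NF : Finset X → Finset X :=
    fun F => Finset.univ.biUnion (fun k : Fin (N + 2) => fim r (A k) F) with hNF
  have hA0 : A 0 = 1 := by simp [hA]
  have hsub : ∀ F, F ⊆ NF F := by
    intro F x hx
    refine Finset.mem_biUnion.mpr ⟨(0 : Fin (N + 2)), Finset.mem_univ _, ?_⟩
    rw [hA0, fim_one]
    exact hx
  have hNFmono : ∀ {F G : Finset X}, F ⊆ G → NF F ⊆ NF G := by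
    intro F G hFG y hy
    rw [hNF] at hy ⊢
    obtain ⟨k, -, hk⟩ := Finset.mem_biUnion.mp hy
    exact Finset.mem_biUnion.mpr ⟨k, Finset.mem_univ _, fim_mono r hFG hk⟩
  have hgrow : ∀ F : Finset X, F.Nonempty → (1 + ε) * F.card ≤ ((NF F).card : ℝ) := by
    intro F hFne
    obtain ⟨k, hkN, hk⟩ := hexp F hFne
    have hAk : A ⟨k + 1, by omega⟩ = e k := by simp [hA]
    have hsub2 : F ∪ (fim r (e k) F \ F) ⊆ NF F := by
      apply Finset.union_subset (hsub F)
      intro y hy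
      rw [Finset.mem_sdiff] at hy
      refine Finset.mem_biUnion.mpr ⟨⟨k + 1, by omega⟩, Finset.mem_univ _, ?_⟩
      rw [hAk]
      exact hy.1
    have hdisj : Disjoint F (fim r (e k) F \ F) := Finset.disjoint_sdiff
    have hcard : F.card + (fim r (e k) F \ F).card ≤ (NF F).card := by
      rw [← Finset.card_union_of_disjoint hdisj]
      exact Finset.card_le_card hsub2
    have hcardR : (F.card : ℝ) + ((fim r (e k) F \ F).card : ℝ) ≤ ((NF F).card : ℝ) := by
      exact_mod_cast hcard
    nlinarith
  have hiterne : ∀ (m : ℕ) (F : Finset X), F.Nonempty → (NF^[m] F).Nonempty := by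
    intro m
    induction m with
    | zero => intro F hF; simpa using hF
    | succ m ih =>
      intro F hF
      rw [Function.iterate_succ_apply']
      exact (ih F hF).mono (hsub _)
  have hiter : ∀ (m : ℕ) (F : Finset X), F.Nonempty →
      (1 + ε) ^ m * F.card ≤ ((NF^[m] F).card : ℝ) := by
    intro m
    induction m with
    | zero => intro F hF; simp
    | succ m ih =>
      intro F hF
      rw [Function.iterate_succ_apply']
      have h1 := ih F hF
      have h2 := hgrow (NF^[m] F) (hiterne m F hF)
      calc (1 + ε) ^ (m + 1) * F.card = (1 + ε) * ((1 + ε) ^ m * F.card) := by ring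
        _ ≤ (1 + ε) * ((NF^[m] F).card : ℝ) := by nlinarith
        _ ≤ _ := h2
  -- choose j with (1+ε)^j ≥ 2
  obtain ⟨j, hj⟩ : ∃ j : ℕ, (2:ℝ) ≤ (1 + ε) ^ j := by
    obtain ⟨j, hj⟩ := pow_unbounded_of_one_lt (2:ℝ) (by linarith : (1:ℝ) < 1 + ε)
    exact ⟨j, hj.le⟩
  -- products of words
  set P0 : ∀ (m : ℕ), (Fin m → Fin (N + 2)) → S :=
    fun m w => (List.ofFn (fun i => A (w i))).prod with hP0
  have hP0zero : ∀ w : Fin 0 → Fin (N + 2), P0 0 w = 1 := by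
    intro w; simp [hP0]
  have hP0succ : ∀ (m : ℕ) (w : Fin (m + 1) → Fin (N + 2)),
      P0 (m + 1) w = A (w 0) * P0 m (w ∘ Fin.succ) := by
    intro m w
    rw [hP0]
    simp [List.ofFn_succ]
  set HN : ∀ (m : ℕ), Finset X → Finset X :=
    fun m F => Finset.univ.biUnion (fun w : Fin m → Fin (N + 2) => fim r (P0 m w) F) with hHN
  have hHN0 : ∀ F, HN 0 F = F := by
    intro F
    ext y
    rw [hHN]
    simp only
    rw [Finset.mem_biUnion]
    constructor
    · rintro ⟨w, -, hw⟩
      rwa [hP0zero w, fim_one] at hw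
    · intro hy
      refine ⟨Fin.elim0, Finset.mem_univ _, ?_⟩
      rwa [hP0zero _, fim_one]
  have hHNstep : ∀ (m : ℕ) (F : Finset X), NF (HN m F) ⊆ HN (m + 1) F := by
    intro m F y hy
    rw [hNF] at hy
    obtain ⟨k, -, hk⟩ := Finset.mem_biUnion.mp hy
    rw [mem_fim] at hk
    obtain ⟨z, hz, hzy⟩ := hk
    rw [hHN] at hz
    obtain ⟨w, -, hw⟩ := Finset.mem_biUnion.mp hz
    rw [hHN]
    refine Finset.mem_biUnion.mpr ⟨Fin.cons k w, Finset.mem_univ _, ?_⟩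
    have hw2 : (Fin.cons k w ∘ Fin.succ) = w := by
      funext i
      simp
    have hco : P0 (m + 1) (Fin.cons k w) = A k * P0 m w := by
      rw [hP0succ, hw2, Fin.cons_zero]
    rw [hco]
    apply fim_fim r F
    rw [mem_fim]
    exact ⟨z, hw, hzy⟩
  have hiter2 : ∀ (m : ℕ) (F : Finset X), NF^[m] F ⊆ HN m F := by
    intro m
    induction m with
    | zero => intro F; rw [hHN0]; simp
    | succ m ih =>
      intro F
      rw [Function.iterate_succ_apply']
      exact (hNFmono (ih F)).trans (hHNstep m F)
  -- flatten the index type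
  set J := Fintype.card (Fin j → Fin (N + 2)) with hJ
  set q : Fin J ≃ (Fin j → Fin (N + 2)) := (Fintype.equivFin (Fin j → Fin (N + 2))).symm with hq
  refine ⟨J, fun i => P0 j (q i), ?_⟩
  intro F
  have hflat : Finset.univ.biUnion (fun i : Fin J => fim r (P0 j (q i)) F) = HN j F := by
    ext y
    rw [hHN, Finset.mem_biUnion, Finset.mem_biUnion]
    constructor
    · rintro ⟨i, -, hi⟩
      exact ⟨q i, Finset.mem_univ _, hi⟩
    · rintro ⟨w, -, hw⟩
      exact ⟨q.symm w, Finset.mem_univ _, by rwa [Equiv.apply_symm_apply]⟩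
  rw [hflat]
  rcases F.eq_empty_or_nonempty with rfl | hFne
  · simp
  have h1 := hiter j F hFne
  have h2 : ((NF^[j] F).card : ℝ) ≤ ((HN j F).card : ℝ) := by
    exact_mod_cast Finset.card_le_card (hiter2 j F)
  have h3 : (2:ℝ) * F.card ≤ ((HN j F).card : ℝ) := by
    have hFpos : (0:ℝ) ≤ (F.card : ℝ) := by positivity
    nlinarith
  exact_mod_cast h3
end ISRAux
namespace ISRAux

open InverseSemigroupRep Finset

variable {S X : Type*} [Monoid S] [Star S] (r : InverseSemigroupRep S X)

theorem not_folner_implies_paradoxical [Countable S]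
    (h : ¬ r.SDomainFolner (Set.univ : Set X)) :
    r.SParadoxical (Set.univ : Set X) := by
  classical
  obtain ⟨J, P, hP⟩ := doubling r h
  -- the Hall bipartite graph
  set t : X × Bool → Finset X :=
    fun p => Finset.univ.biUnion (fun i : Fin J => (r.α (P i) p.1).toFinset) with ht
  have hall : ∀ W : Finset (X × Bool), W.card ≤ (W.biUnion t).card := by
    intro W
    set F := W.image Prod.fst with hF
    have h1 : W.biUnion t = Finset.univ.biUnion (fun i : Fin J => fim r (P i) F) := by
      ext y
      simp only [Finset.mem_biUnion, ht, mem_fim, Finset.mem_univ, true_and, hF,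
        Finset.mem_image, Option.mem_toFinset, Option.mem_def]
      constructor
      · rintro ⟨p, hp, i, hi⟩
        exact ⟨i, p.1, ⟨p, hp, rfl⟩, hi⟩
      · rintro ⟨i, x, ⟨p, hp, hpx⟩, hx⟩
        exact ⟨p, hp, i, by rwa [hpx]⟩
    have h2 : W.card ≤ 2 * F.card := by
      have hWsub : W ⊆ F ×ˢ (Finset.univ : Finset Bool) := by
        intro p hp
        rw [Finset.mem_product]
        exact ⟨Finset.mem_image_of_mem Prod.fst hp, Finset.mem_univ _⟩
      calc W.card ≤ (F ×ˢ (Finset.univ : Finset Bool)).card := Finset.card_le_card hWsub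
        _ = F.card * 2 := by rw [Finset.card_product]; simp
        _ = 2 * F.card := by ring
    rw [h1]
    exact h2.trans (hP F)
  obtain ⟨Φ, hΦinj, hΦmem⟩ := (Finset.all_card_le_biUnion_card_iff_exists_injective t).mp hall
  have hmem : ∀ p : X × Bool, ∃ i : Fin J, r.α (P i) p.1 = some (Φ p) := by
    intro p
    have hp := hΦmem p
    rw [ht] at hp
    obtain ⟨i, -, hi⟩ := Finset.mem_biUnion.mp hp
    rw [Option.mem_toFinset, Option.mem_def] at hi
    exact ⟨i, hi⟩
  choose idx hidx using hmem
  -- the paradoxical pieces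
  set As : Fin J → Set X := fun i => {y | ∃ x : X, idx (x, false) = i ∧ Φ (x, false) = y}
    with hAs
  set Bs : Fin J → Set X := fun i => {y | ∃ x : X, idx (x, true) = i ∧ Φ (x, true) = y}
    with hBs
  have him : ∀ (b : Bool) (i : Fin J),
      r.im (star (P i)) {y | ∃ x : X, idx (x, b) = i ∧ Φ (x, b) = y}
        = {x : X | idx (x, b) = i} := by
    intro b i
    ext z
    constructor
    · rintro ⟨y, ⟨x, hxi, hxy⟩, hyz⟩
      have h1 : r.α (P i) x = some y := by rw [← hxy, ← hxi]; exact hidx (x, b)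
      have h2 : r.α (star (P i)) y = some x := star_apply r h1
      rw [h2] at hyz
      have := Option.some.inj hyz
      rw [← this]
      exact hxi
    · intro hz
      refine ⟨Φ (z, b), ⟨z, hz, rfl⟩, ?_⟩
      apply star_apply r
      rw [← hz]
      exact hidx (z, b)
  refine ⟨J, J, fun i => star (P i), fun i => star (P i), As, Bs,
    fun i => Set.subset_univ _, fun j => Set.subset_univ _, ?_, ?_, ?_, ?_, ?_, ?_, ?_, ?_, ?_⟩
  · -- As i ⊆ dom
    intro i y hy
    obtain ⟨x, hxi, hxy⟩ := hy
    have h1 : r.α (P i) x = some y := by rw [← hxy, ← hxi]; exact hidx (x, false)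
    exact mem_dom_of_some r (star_apply r h1)
  · -- Bs j ⊆ dom
    intro i y hy
    obtain ⟨x, hxi, hxy⟩ := hy
    have h1 : r.α (P i) x = some y := by rw [← hxy, ← hxi]; exact hidx (x, true)
    exact mem_dom_of_some r (star_apply r h1)
  · -- As pairwise disjoint
    intro i j hij
    rw [Set.disjoint_left]
    rintro y ⟨x, hxi, hxy⟩ ⟨x', hx'j, hx'y⟩
    apply hij
    have : (x, false) = (x', false) := hΦinj (by rw [hxy, hx'y])
    rw [← hxi, ← hx'j, (Prod.mk.injEq _ _ _ _).mp this |>.1]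
  · -- Bs pairwise disjoint
    intro i j hij
    rw [Set.disjoint_left]
    rintro y ⟨x, hxi, hxy⟩ ⟨x', hx'j, hx'y⟩
    apply hij
    have : (x, true) = (x', true) := hΦinj (by rw [hxy, hx'y])
    rw [← hxi, ← hx'j, (Prod.mk.injEq _ _ _ _).mp this |>.1]
  · -- As disjoint from Bs
    intro i j
    rw [Set.disjoint_left]
    rintro y ⟨x, hxi, hxy⟩ ⟨x', hx'j, hx'y⟩
    have : (x, false) = (x', true) := hΦinj (by rw [hxy, hx'y])
    simpa using (Prod.mk.injEq _ _ _ _).mp this |>.2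
  · -- images of As pairwise disjoint
    intro i j hij
    rw [him false i, him false j, Set.disjoint_left]
    intro x hxi hxj
    exact hij (by rw [← hxi, ← hxj])
  · -- images of Bs pairwise disjoint
    intro i j hij
    rw [him true i, him true j, Set.disjoint_left]
    intro x hxi hxj
    exact hij (by rw [← hxi, ← hxj])
  · -- union of images of As is univ
    apply Set.eq_univ_of_forall
    intro x
    rw [Set.mem_iUnion]
    exact ⟨idx (x, false), by rw [him false]; exact rfl⟩
  · -- union of images of Bs is univ
    apply Set.eq_univ_of_forall
    intro x
    rw [Set.mem_iUnion]
    exact ⟨idx (x, true), by rw [him true]; exact rfl⟩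

end ISRAux

/-- For a representation of a countable discrete unital inverse semigroup `S` on a set `X`,
the following are equivalent: (1) `X` is `S`-domain measurable; (2) `X` is not
`S`-paradoxical; (3) `X` is `S`-domain Følner. -/
theorem statement8 {S X : Type*} [Monoid S] [Star S] [IsInverseSemigroup S] [Countable S]
    (r : InverseSemigroupRep S X) :
    (r.SDomainMeasurableSet (Set.univ : Set X) ↔ ¬ r.SParadoxical (Set.univ : Set X)) ∧
    (r.SDomainMeasurableSet (Set.univ : Set X) ↔ r.SDomainFolner (Set.univ : Set X)) := by
  constructor
  · constructor
    · exact ISRAux.measurable_implies_not_paradoxical r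
    · intro hnp
      by_cases hf : r.SDomainFolner (Set.univ : Set X)
      · exact ISRAux.folner_implies_measurable r hf
      · exact absurd (ISRAux.not_folner_implies_paradoxical r hf) hnp
  · constructor
    · intro hm
      by_contra hnf
      exact ISRAux.measurable_implies_not_paradoxical r hm
        (ISRAux.not_folner_implies_paradoxical r hnf)
    · exact ISRAux.folner_implies_measurable r
end

section
/- Let α be a representation of a countable discrete unital inverse semigroup S on a set X. If X is S-domain measurable, then there exists a state m on ℓ∞(X) (a linear functional on the bounded complex-valued functions on X with m(f) ≥ 0 whenever f ≥ 0 and m(1) = 1) such that m(s·f) = m(f·χ_{D_{s*s}}) for every f ∈ ℓ∞(X) and every s ∈ S, where χ_{D_{s*s}} is the characteristic function of D_{s*s}. -/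
open scoped ENNReal

namespace Statement9Aux

/-- A normalized finitely additive nonnegative real measure on 𝒫(X). -/
structure NiceMeasure (X : Type*) where
  ν : Set X → ℝ
  empty : ν ∅ = 0
  addl : ∀ A B : Set X, Disjoint A B → ν (A ∪ B) = ν A + ν B
  nonneg : ∀ A, 0 ≤ ν A
  univ : ν Set.univ = 1

variable {X : Type*} (P : NiceMeasure X)

lemma NiceMeasure.biUnion {ι : Type*} (T : Finset ι) (C : ι → Set X)
    (hdisj : ∀ i ∈ T, ∀ j ∈ T, i ≠ j → Disjoint (C i) (C j)) :
    P.ν (⋃ i ∈ T, C i) = ∑ i ∈ T, P.ν (C i) := by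
  classical
  induction T using Finset.induction_on with
  | empty => simpa using P.empty
  | @insert a T ha ih =>
    rw [Finset.set_biUnion_insert, Finset.sum_insert ha, P.addl, ih]
    · intro i hi j hj hij
      exact hdisj i (Finset.mem_insert_of_mem hi) j (Finset.mem_insert_of_mem hj) hij
    · rw [Set.disjoint_iUnion₂_right]
      intro i hi
      exact hdisj a (Finset.mem_insert_self a T) i (Finset.mem_insert_of_mem hi)
        (fun h => ha (h ▸ hi))

open Classical in
/-- elementary integral of a finite-range function. -/
noncomputable def elInt (w : X → ℂ) : ℂ :=
  if hfin : (Set.range w).Finite then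
    ∑ c ∈ hfin.toFinset, c * (P.ν (w ⁻¹' {c}) : ℂ)
  else 0

/-- The key computation: the elementary integral against a finite partition on which `w`
is constant. -/
lemma elInt_eq_sum {w : X → ℂ} (hw : (Set.range w).Finite)
    {ι : Type*} (T : Finset ι) (C : ι → Set X) (val : ι → ℂ)
    (hcover : (⋃ i ∈ T, C i) = Set.univ)
    (hdisj : ∀ i ∈ T, ∀ j ∈ T, i ≠ j → Disjoint (C i) (C j))
    (hconst : ∀ i ∈ T, ∀ x ∈ C i, w x = val i) :
    elInt P w = ∑ i ∈ T, val i * (P.ν (C i) : ℂ) := by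
  classical
  rw [elInt, dif_pos hw]
  have hfib : ∀ c, w ⁻¹' {c} = ⋃ i ∈ T, (w ⁻¹' {c} ∩ C i) := by
    intro c
    ext x
    simp only [Set.mem_preimage, Set.mem_singleton_iff, Set.mem_iUnion, Set.mem_inter_iff]
    constructor
    · intro hx
      have : x ∈ (⋃ i ∈ T, C i) := hcover ▸ Set.mem_univ x
      simp only [Set.mem_iUnion] at this
      obtain ⟨i, hi, hxi⟩ := this
      exact ⟨i, hi, hx, hxi⟩
    · rintro ⟨i, hi, hx, _⟩
      exact hx
  have step1 : ∀ c, P.ν (w ⁻¹' {c}) = ∑ i ∈ T, P.ν (w ⁻¹' {c} ∩ C i) := by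
    intro c
    conv_lhs => rw [hfib c]
    rw [P.biUnion]
    intro i hi j hj hij
    exact Set.disjoint_of_subset Set.inter_subset_right Set.inter_subset_right
      (hdisj i hi j hj hij)
  calc ∑ c ∈ hw.toFinset, c * (P.ν (w ⁻¹' {c}) : ℂ)
      = ∑ c ∈ hw.toFinset, ∑ i ∈ T, c * (P.ν (w ⁻¹' {c} ∩ C i) : ℂ) := by
        refine Finset.sum_congr rfl fun c _ => ?_
        rw [step1 c]
        push_cast
        rw [Finset.mul_sum]
    _ = ∑ i ∈ T, ∑ c ∈ hw.toFinset, c * (P.ν (w ⁻¹' {c} ∩ C i) : ℂ) := Finset.sum_comm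
    _ = ∑ i ∈ T, val i * (P.ν (C i) : ℂ) := by
        refine Finset.sum_congr rfl fun i hi => ?_
        have hCi : w ⁻¹' {val i} ∩ C i = C i := by
          apply Set.inter_eq_right.mpr
          intro x hx
          exact hconst i hi x hx
        rw [Finset.sum_eq_single (val i)]
        · rw [hCi]
        · intro b _ hb
          have : w ⁻¹' {b} ∩ C i = ∅ := by
            ext x
            simp only [Set.mem_inter_iff, Set.mem_preimage, Set.mem_singleton_iff,
              Set.mem_empty_iff_false, iff_false, not_and]
            intro hxb hxC
            exact hb (hxb ▸ hconst i hi x hxC)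
          rw [this, P.empty]
          simp
        · intro hv
          have : C i = ∅ := by
            by_contra hne
            obtain ⟨x, hx⟩ := Set.nonempty_iff_ne_empty.mpr hne
            exact hv (by
              rw [Set.Finite.mem_toFinset]
              exact ⟨x, hconst i hi x hx⟩)
          rw [hCi, this, P.empty]
          simp


lemma elInt_def {w : X → ℂ} (hw : (Set.range w).Finite) :
    elInt P w = ∑ c ∈ hw.toFinset, c * (P.ν (w ⁻¹' {c}) : ℂ) := by
  rw [elInt, dif_pos hw]

lemma elInt_add {u v : X → ℂ} (hu : (Set.range u).Finite) (hv : (Set.range v).Finite) :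
    elInt P (u + v) = elInt P u + elInt P v := by
  classical
  have huv : (Set.range (u + v)).Finite := by
    apply Set.Finite.subset (Set.Finite.image2 (· + ·) hu hv)
    rintro - ⟨x, rfl⟩
    exact Set.mem_image2_of_mem ⟨x, rfl⟩ ⟨x, rfl⟩
  set T := hu.toFinset ×ˢ hv.toFinset with hT
  set C : ℂ × ℂ → Set X := fun p => u ⁻¹' {p.1} ∩ v ⁻¹' {p.2} with hC
  have hcover : (⋃ p ∈ T, C p) = Set.univ := by
    apply Set.eq_univ_iff_forall.mpr
    intro x
    simp only [Set.mem_iUnion]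
    refine ⟨(u x, v x), ?_, rfl, rfl⟩
    simp [hT, Set.Finite.mem_toFinset]
  have hdisj : ∀ p ∈ T, ∀ q ∈ T, p ≠ q → Disjoint (C p) (C q) := by
    intro p _ q _ hpq
    rw [Set.disjoint_left]
    rintro x ⟨hx1, hx2⟩ ⟨hy1, hy2⟩
    apply hpq
    ext
    · rw [← hx1, ← hy1]
    · rw [← hx2, ← hy2]
  have e1 := elInt_eq_sum P huv T C (fun p => p.1 + p.2) hcover hdisj
    (by rintro p _ x ⟨hx1, hx2⟩
        simp only [Set.mem_preimage, Set.mem_singleton_iff] at hx1 hx2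
        simp [hx1, hx2])
  have e2 := elInt_eq_sum P hu T C (fun p => p.1) hcover hdisj
    (by rintro p _ x ⟨hx1, _⟩; exact hx1)
  have e3 := elInt_eq_sum P hv T C (fun p => p.2) hcover hdisj
    (by rintro p _ x ⟨_, hx2⟩; exact hx2)
  rw [e1, e2, e3, ← Finset.sum_add_distrib]
  refine Finset.sum_congr rfl fun p _ => ?_
  ring

lemma elInt_smul (c : ℂ) {u : X → ℂ} (hu : (Set.range u).Finite) :
    elInt P (c • u) = c * elInt P u := by
  classical
  have hcu : (Set.range (c • u)).Finite := by
    apply Set.Finite.subset (hu.image (c * ·))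
    rintro - ⟨x, rfl⟩
    exact ⟨u x, ⟨x, rfl⟩, rfl⟩
  have hcover : (⋃ a ∈ hu.toFinset, u ⁻¹' {a}) = Set.univ := by
    apply Set.eq_univ_iff_forall.mpr
    intro x
    simp only [Set.mem_iUnion]
    exact ⟨u x, by simp [Set.Finite.mem_toFinset], rfl⟩
  have hdisj : ∀ a ∈ hu.toFinset, ∀ b ∈ hu.toFinset, a ≠ b →
      Disjoint (u ⁻¹' {a} : Set X) (u ⁻¹' {b}) := by
    intro a _ b _ hab
    rw [Set.disjoint_left]
    intro x hx1 hx2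
    simp only [Set.mem_preimage, Set.mem_singleton_iff] at hx1 hx2
    exact hab (hx1 ▸ hx2 ▸ rfl)
  have e1 := elInt_eq_sum P hcu hu.toFinset (fun a => u ⁻¹' {a}) (fun a => c * a)
    hcover hdisj (by intro a _ x hx
                     simp only [Set.mem_preimage, Set.mem_singleton_iff] at hx
                     simp [hx])
  have e2 := elInt_eq_sum P hu hu.toFinset (fun a => u ⁻¹' {a}) (fun a => a)
    hcover hdisj (by intro a _ x hx; exact hx)
  rw [e1, e2, Finset.mul_sum]
  refine Finset.sum_congr rfl fun a _ => ?_
  ring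

lemma elInt_sub {u v : X → ℂ} (hu : (Set.range u).Finite) (hv : (Set.range v).Finite) :
    elInt P (u - v) = elInt P u - elInt P v := by
  have hnv : (Set.range ((-1 : ℂ) • v)).Finite := by
    apply Set.Finite.subset (hv.image ((-1 : ℂ) * ·))
    rintro - ⟨x, rfl⟩
    exact ⟨v x, ⟨x, rfl⟩, rfl⟩
  have : u - v = u + (-1 : ℂ) • v := by
    funext x; simp [sub_eq_add_neg]
  rw [this, elInt_add P hu hnv, elInt_smul P (-1) hv]
  ring

lemma elInt_norm_le {w : X → ℂ} (hw : (Set.range w).Finite) {M : ℝ}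
    (hM : ∀ x, ‖w x‖ ≤ M) : ‖elInt P w‖ ≤ M := by
  classical
  rw [elInt_def P hw]
  have hpart : P.ν Set.univ = ∑ c ∈ hw.toFinset, P.ν (w ⁻¹' {c}) := by
    rw [← P.biUnion hw.toFinset (fun c => w ⁻¹' {c})]
    · congr 1
      apply (Set.eq_univ_iff_forall.mpr _).symm
      intro x
      simp only [Set.mem_iUnion]
      exact ⟨w x, by simp [Set.Finite.mem_toFinset], rfl⟩
    · intro a _ b _ hab
      rw [Set.disjoint_left]
      intro x hx1 hx2
      simp only [Set.mem_preimage, Set.mem_singleton_iff] at hx1 hx2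
      exact hab (hx1 ▸ hx2 ▸ rfl)
  calc ‖∑ c ∈ hw.toFinset, c * (P.ν (w ⁻¹' {c}) : ℂ)‖
      ≤ ∑ c ∈ hw.toFinset, ‖c * (P.ν (w ⁻¹' {c}) : ℂ)‖ := norm_sum_le _ _
    _ ≤ ∑ c ∈ hw.toFinset, M * P.ν (w ⁻¹' {c}) := by
        refine Finset.sum_le_sum fun c hc => ?_
        rw [norm_mul, Complex.norm_real, Real.norm_of_nonneg (P.nonneg _)]
        obtain ⟨x, hx⟩ := Set.Finite.mem_toFinset hw |>.mp hc
        exact mul_le_mul_of_nonneg_right (hx ▸ hM x) (P.nonneg _)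
    _ = M * P.ν Set.univ := by rw [hpart, Finset.mul_sum]
    _ = M := by rw [P.univ, mul_one]

lemma elInt_re_nonneg {w : X → ℂ} (hw : (Set.range w).Finite)
    (hpos : ∀ x, 0 ≤ (w x).re) : 0 ≤ (elInt P w).re := by
  rw [elInt_def P hw, Complex.re_sum]
  refine Finset.sum_nonneg fun c hc => ?_
  obtain ⟨x, hx⟩ := Set.Finite.mem_toFinset hw |>.mp hc
  have : (c * (P.ν (w ⁻¹' {c}) : ℂ)).re = c.re * P.ν (w ⁻¹' {c}) := by
    simp [Complex.mul_re]
  rw [this]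
  exact mul_nonneg (hx ▸ hpos x) (P.nonneg _)

lemma elInt_im_zero {w : X → ℂ} (hw : (Set.range w).Finite)
    (him : ∀ x, (w x).im = 0) : (elInt P w).im = 0 := by
  rw [elInt_def P hw, Complex.im_sum]
  refine Finset.sum_eq_zero fun c hc => ?_
  obtain ⟨x, hx⟩ := Set.Finite.mem_toFinset hw |>.mp hc
  have : (c * (P.ν (w ⁻¹' {c}) : ℂ)).im = c.im * P.ν (w ⁻¹' {c}) := by
    simp [Complex.mul_im]
  rw [this]
  have h0 : c.im = 0 := hx ▸ him x
  rw [h0, zero_mul]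

lemma elInt_one : elInt P (fun _ : X => (1 : ℂ)) = 1 := by
  have hw : (Set.range (fun _ : X => (1 : ℂ))).Finite :=
    Set.finite_singleton 1 |>.subset (by rintro - ⟨x, rfl⟩; exact rfl)
  have := elInt_eq_sum P hw ({()} : Finset Unit) (fun _ => Set.univ) (fun _ => 1)
    (by simp [Set.iUnion_const]) (by simp) (by intro _ _ _ _; rfl)
  rw [this]
  simp [P.univ]

end Statement9Aux

namespace Statement9Aux
open InverseSemigroupRep

variable {S X : Type*} [Monoid S] [Star S]

lemma range_elim_finite (r : InverseSemigroupRep S X) (s : S) {u : X → ℂ}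
    (hu : (Set.range u).Finite) :
    (Set.range fun x => ((r.α (star s)) x).elim 0 u).Finite := by
  apply Set.Finite.subset (hu.insert 0)
  rintro - ⟨x, rfl⟩
  cases h : (r.α (star s)) x with
  | none => simp [h]
  | some y => simp only [h, Option.elim]; exact Set.mem_insert_of_mem _ ⟨y, rfl⟩

lemma range_indicator_finite (r : InverseSemigroupRep S X) (s : S) {u : X → ℂ}
    (hu : (Set.range u).Finite) :
    (Set.range fun x => (r.dom s).indicator u x).Finite := by
  apply Set.Finite.subset (hu.insert 0)
  rintro - ⟨x, rfl⟩
  show (r.dom s).indicator u x ∈ _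
  by_cases h : x ∈ r.dom s
  · rw [Set.indicator_of_mem h]; exact Set.mem_insert_of_mem _ ⟨x, rfl⟩
  · rw [Set.indicator_of_notMem h]; exact Set.mem_insert _ _

lemma elInt_invariance (r : InverseSemigroupRep S X) (P : NiceMeasure X)
    (hinv : ∀ (s : S) (B : Set X), B ⊆ r.dom s → P.ν (r.im s B) = P.ν B)
    (s : S) {u : X → ℂ} (hu : (Set.range u).Finite) :
    elInt P (fun x => ((r.α (star s)) x).elim 0 u)
      = elInt P (fun x => (r.dom s).indicator u x) := by
  classical
  have hAs : r.α (star s) = (r.α s).symm := r.map_star s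
  set T : Finset (Option ℂ) := insert none (hu.toFinset.image some) with hTdef
  have hnone : none ∉ hu.toFinset.image some := by simp
  -- left partition
  set CL : Option ℂ → Set X :=
    fun o => o.elim {x | (r.α s).symm x = none}
      (fun c => r.im s (u ⁻¹' {c} ∩ r.dom s)) with hCL
  -- right partition
  set CR : Option ℂ → Set X :=
    fun o => o.elim (r.dom s)ᶜ (fun c => u ⁻¹' {c} ∩ r.dom s) with hCR
  have memL : ∀ (c : ℂ) (x : X), x ∈ CL (some c) ↔
      ∃ y, u y = c ∧ ((r.α s) y).isSome ∧ (r.α s) y = some x := by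
    intro c x
    simp only [hCL, Option.elim, im, dom, Set.mem_setOf_eq, Set.mem_inter_iff,
      Set.mem_preimage, Set.mem_singleton_iff]
    constructor
    · rintro ⟨y, ⟨hy1, hy2⟩, hy3⟩; exact ⟨y, hy1, hy2, hy3⟩
    · rintro ⟨y, hy1, hy2, hy3⟩; exact ⟨y, ⟨hy1, hy2⟩, hy3⟩
  have hcoverL : (⋃ o ∈ T, CL o) = Set.univ := by
    apply Set.eq_univ_iff_forall.mpr
    intro x
    simp only [Set.mem_iUnion]
    cases h : (r.α s).symm x with
    | none => exact ⟨none, Finset.mem_insert_self _ _, h⟩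
    | some y =>
      have hy : (r.α s) y = some x := (PEquiv.eq_some_iff (r.α s)).mp h
      refine ⟨some (u y), ?_, (memL (u y) x).mpr ⟨y, rfl, by rw [hy]; rfl, hy⟩⟩
      exact Finset.mem_insert_of_mem (Finset.mem_image_of_mem some (by
        simp [Set.Finite.mem_toFinset]))
  have hdisjL : ∀ o ∈ T, ∀ o' ∈ T, o ≠ o' → Disjoint (CL o) (CL o') := by
    have key : ∀ (c : ℂ) (x : X), x ∈ CL (some c) → (r.α s).symm x ≠ none ∧
        ∀ c' : ℂ, x ∈ CL (some c') → c = c' := by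
      intro c x hx
      obtain ⟨y, hy1, _, hy3⟩ := (memL c x).mp hx
      have hsy : (r.α s).symm x = some y := (PEquiv.eq_some_iff (r.α s)).mpr hy3
      refine ⟨by rw [hsy]; simp, fun c' hx' => ?_⟩
      obtain ⟨y', hy1', _, hy3'⟩ := (memL c' x).mp hx'
      have hsy' : (r.α s).symm x = some y' := (PEquiv.eq_some_iff (r.α s)).mpr hy3'
      rw [hsy] at hsy'
      have hyy : y = y' := Option.some_injective _ hsy'
      rw [← hy1, ← hy1', hyy]
    rintro o - o' - hoo
    rw [Set.disjoint_left]
    intro x hx hx'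
    match o, o' with
    | none, none => exact hoo rfl
    | none, some c' => exact (key c' x hx').1 hx
    | some c, none => exact (key c x hx).1 hx'
    | some c, some c' => exact hoo (by rw [(key c x hx).2 c' hx'])
  have hconstL : ∀ o ∈ T, ∀ x ∈ CL o,
      ((r.α (star s)) x).elim 0 u = o.elim 0 id := by
    rintro o - x hx
    match o with
    | none =>
      have : (r.α s).symm x = none := hx
      simp [hAs, this]
    | some c =>
      obtain ⟨y, hy1, _, hy3⟩ := (memL c x).mp hx
      have hsy : (r.α s).symm x = some y := (PEquiv.eq_some_iff (r.α s)).mpr hy3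
      simp [hAs, hsy, hy1]
  have hcoverR : (⋃ o ∈ T, CR o) = Set.univ := by
    apply Set.eq_univ_iff_forall.mpr
    intro x
    simp only [Set.mem_iUnion]
    by_cases h : x ∈ r.dom s
    · refine ⟨some (u x), Finset.mem_insert_of_mem (Finset.mem_image_of_mem some (by
        simp [Set.Finite.mem_toFinset])), ⟨rfl, h⟩⟩
    · exact ⟨none, Finset.mem_insert_self _ _, h⟩
  have hdisjR : ∀ o ∈ T, ∀ o' ∈ T, o ≠ o' → Disjoint (CR o) (CR o') := by
    rintro o - o' - hoo
    rw [Set.disjoint_left]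
    intro x hx hx'
    match o, o' with
    | none, none => exact hoo rfl
    | none, some c' => exact hx hx'.2
    | some c, none => exact hx' hx.2
    | some c, some c' => exact hoo (by
        have h1 : u x = c := hx.1
        have h2 : u x = c' := hx'.1
        rw [← h1, ← h2])
  have hconstR : ∀ o ∈ T, ∀ x ∈ CR o,
      (r.dom s).indicator u x = o.elim 0 id := by
    rintro o - x hx
    match o with
    | none => exact Set.indicator_of_notMem hx u
    | some c =>
      obtain ⟨h1, h2⟩ := hx
      rw [Set.indicator_of_mem h2 u]
      exact h1
  rw [elInt_eq_sum P (range_elim_finite r s hu) T CL (fun o => o.elim 0 id)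
      hcoverL hdisjL hconstL,
    elInt_eq_sum P (range_indicator_finite r s hu) T CR (fun o => o.elim 0 id)
      hcoverR hdisjR hconstR]
  rw [hTdef, Finset.sum_insert hnone, Finset.sum_insert hnone]
  simp only [Option.elim, id]
  rw [zero_mul, zero_mul]
  congr 1
  rw [Finset.sum_image (fun a _ b _ h => Option.some_injective _ h),
    Finset.sum_image (fun a _ b _ h => Option.some_injective _ h)]
  refine Finset.sum_congr rfl fun c _ => ?_
  congr 1
  have := hinv s (u ⁻¹' {c} ∩ r.dom s) Set.inter_subset_right
  simp only [hCL, hCR, Option.elim]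
  rw [this]

end Statement9Aux

namespace Statement9Aux

/-- Discretization of a complex number to a 1/(n+1) grid. -/
noncomputable def Q (n : ℕ) (c : ℂ) : ℂ :=
  ((⌊(n + 1 : ℝ) * c.re⌋ / (n + 1) : ℝ) : ℂ) +
    ((⌊(n + 1 : ℝ) * c.im⌋ / (n + 1) : ℝ) : ℂ) * Complex.I

lemma Q_re (n : ℕ) (c : ℂ) : (Q n c).re = (⌊(n + 1 : ℝ) * c.re⌋ / (n + 1) : ℝ) := by
  simp [Q, -Complex.ofReal_div]

lemma Q_im (n : ℕ) (c : ℂ) : (Q n c).im = (⌊(n + 1 : ℝ) * c.im⌋ / (n + 1) : ℝ) := by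
  simp [Q, -Complex.ofReal_div]

lemma floor_div_abs {m : ℝ} (hm : 0 < m) (t : ℝ) : |(⌊m * t⌋ : ℝ) / m - t| ≤ 1 / m := by
  have h1 : (⌊m * t⌋ : ℝ) ≤ m * t := Int.floor_le _
  have h2 : m * t - 1 ≤ (⌊m * t⌋ : ℝ) := (Int.sub_one_lt_floor _).le
  have he : (⌊m * t⌋ : ℝ) / m - t = ((⌊m * t⌋ : ℝ) - m * t) / m := by
    field_simp
  rw [he, abs_div, abs_of_pos hm]
  gcongr
  rw [abs_le]
  constructor <;> linarith

lemma Q_dist (n : ℕ) (c : ℂ) : ‖Q n c - c‖ ≤ 2 / (n + 1) := by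
  have hm : (0:ℝ) < (n : ℝ) + 1 := by positivity
  have hre : (Q n c - c).re = (⌊(n + 1 : ℝ) * c.re⌋ : ℝ) / (n + 1) - c.re := by
    simp [Q, -Complex.ofReal_div]
  have him : (Q n c - c).im = (⌊(n + 1 : ℝ) * c.im⌋ : ℝ) / (n + 1) - c.im := by
    simp [Q, -Complex.ofReal_div]
  calc ‖Q n c - c‖ ≤ |(Q n c - c).re| + |(Q n c - c).im| := by
        exact Complex.norm_le_abs_re_add_abs_im _
    _ ≤ 1 / ((n : ℝ) + 1) + 1 / ((n : ℝ) + 1) := by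
        rw [hre, him]
        exact add_le_add (floor_div_abs hm _) (floor_div_abs hm _)
    _ = 2 / ((n : ℝ) + 1) := by ring

lemma Q_finite_range {X : Type*} (n : ℕ) (f : X → ℂ) (M : ℝ) (hM : ∀ x, ‖f x‖ ≤ M) :
    (Set.range fun x => Q n (f x)).Finite := by
  have hbound : ∀ t : ℝ, |t| ≤ M →
      ⌊-((n + 1 : ℝ) * M)⌋ ≤ ⌊(n + 1 : ℝ) * t⌋ ∧ ⌊(n + 1 : ℝ) * t⌋ ≤ ⌊(n + 1 : ℝ) * M⌋ := by
    intro t ht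
    have h1 := abs_le.mp ht
    have hn : (0:ℝ) ≤ (n : ℝ) + 1 := by positivity
    constructor
    · exact Int.floor_mono (by nlinarith [h1.1])
    · exact Int.floor_mono (by nlinarith [h1.2])
  apply Set.Finite.subset (Set.Finite.image
    (fun p : ℤ × ℤ => (((p.1 : ℝ) / (n + 1) : ℝ) : ℂ) + (((p.2 : ℝ) / (n + 1) : ℝ) : ℂ) * Complex.I)
    ((Set.finite_Icc (⌊-((n + 1 : ℝ) * M)⌋) (⌊(n + 1 : ℝ) * M⌋)).prod
      (Set.finite_Icc (⌊-((n + 1 : ℝ) * M)⌋) (⌊(n + 1 : ℝ) * M⌋))))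
  rintro - ⟨x, rfl⟩
  refine ⟨(⌊(n + 1 : ℝ) * (f x).re⌋, ⌊(n + 1 : ℝ) * (f x).im⌋), ⟨?_, ?_⟩, rfl⟩
  · have := Complex.abs_re_le_norm (f x)
    have h2 : |(f x).re| ≤ M := le_trans this (by exact hM x)
    exact Set.mem_Icc.mpr (hbound _ h2)
  · have := Complex.abs_im_le_norm (f x)
    have h2 : |(f x).im| ≤ M := le_trans this (by exact hM x)
    exact Set.mem_Icc.mpr (hbound _ h2)

lemma Q_one (n : ℕ) : Q n 1 = 1 := by
  have hfl : ⌊(n + 1 : ℝ)⌋ = (n : ℤ) + 1 := by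
    rw [show ((n : ℝ) + 1) = ((n + 1 : ℤ) : ℝ) by push_cast; ring, Int.floor_intCast]
  have hd : ((⌊(n + 1 : ℝ) * (1:ℂ).re⌋ : ℝ) / (n + 1) : ℝ) = 1 := by
    rw [Complex.one_re, mul_one, hfl]
    push_cast
    rw [div_self (by positivity)]
  have hz : ((⌊(n + 1 : ℝ) * (1:ℂ).im⌋ : ℝ) / (n + 1) : ℝ) = 0 := by
    rw [Complex.one_im, mul_zero, Int.floor_zero]
    simp
  rw [Q, hd, hz]
  simp

lemma Q_re_nonneg (n : ℕ) {c : ℂ} (hc : 0 ≤ c.re) : 0 ≤ (Q n c).re := by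
  rw [Q_re]
  apply div_nonneg _ (by positivity)
  have h0 : (0:ℝ) ≤ (n + 1 : ℝ) * c.re := mul_nonneg (by positivity) hc
  exact_mod_cast Int.floor_nonneg.mpr h0

lemma Q_im_zero (n : ℕ) {c : ℂ} (hc : c.im = 0) : (Q n c).im = 0 := by
  rw [Q_im, hc]
  simp

end Statement9Aux

namespace Statement9Aux

open Filter Topology

variable {X : Type*} (P : NiceMeasure X)

lemma range_add_finite {u v : X → ℂ} (hu : (Set.range u).Finite)
    (hv : (Set.range v).Finite) : (Set.range (u + v)).Finite := by
  apply Set.Finite.subset (Set.Finite.image2 (· + ·) hu hv)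
  rintro - ⟨x, rfl⟩
  exact Set.mem_image2_of_mem ⟨x, rfl⟩ ⟨x, rfl⟩

lemma range_smul_finite (c : ℂ) {u : X → ℂ} (hu : (Set.range u).Finite) :
    (Set.range (c • u)).Finite := by
  apply Set.Finite.subset (hu.image (c * ·))
  rintro - ⟨x, rfl⟩
  exact ⟨u x, ⟨x, rfl⟩, rfl⟩

lemma range_sub_finite {u v : X → ℂ} (hu : (Set.range u).Finite)
    (hv : (Set.range v).Finite) : (Set.range (u - v)).Finite := by
  apply Set.Finite.subset (Set.Finite.image2 (· - ·) hu hv)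
  rintro - ⟨x, rfl⟩
  exact Set.mem_image2_of_mem ⟨x, rfl⟩ ⟨x, rfl⟩

lemma elInt_close {u v : X → ℂ} (hu : (Set.range u).Finite) (hv : (Set.range v).Finite)
    {e : ℝ} (h : ∀ x, ‖u x - v x‖ ≤ e) : ‖elInt P u - elInt P v‖ ≤ e := by
  rw [← elInt_sub P hu hv]
  exact elInt_norm_le P (range_sub_finite hu hv) h

lemma tendsto_ceps (c : ℝ) : Tendsto (fun n : ℕ => c / ((n : ℝ) + 1)) atTop (𝓝 0) := by
  have h := (tendsto_const_div_atTop_nhds_zero_nat c).comp (tendsto_add_atTop_nat 1)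
  refine h.congr fun n => ?_
  simp only [Function.comp_apply]
  push_cast
  rfl

noncomputable def seq (f : lp (fun _ : X => ℂ) ∞) (n : ℕ) : ℂ :=
  elInt P (fun x => Q n (f x))

lemma f_bound (f : lp (fun _ : X => ℂ) ∞) (x : X) : ‖f x‖ ≤ ‖f‖ :=
  lp.norm_apply_le_norm ENNReal.top_ne_zero f x

lemma seq_fin {X : Type*} (f : lp (fun _ : X => ℂ) ∞) (n : ℕ) :
    (Set.range fun x => Q n (f x)).Finite :=
  Q_finite_range n _ ‖f‖ (f_bound f)

lemma seq_cauchy (f : lp (fun _ : X => ℂ) ∞) : CauchySeq (seq P f) := by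
  refine cauchySeq_of_le_tendsto_0 (fun N => 4 / ((N : ℝ) + 1)) ?_ ?_
  · intro m k N hm hk
    rw [dist_eq_norm]
    have hb := elInt_close P (seq_fin f m) (seq_fin f k)
      (e := 2 / ((m : ℝ) + 1) + 2 / ((k : ℝ) + 1)) (fun x => by
        have t := dist_triangle (Q m (f x)) (f x) (Q k (f x))
        rw [dist_eq_norm, dist_eq_norm, dist_eq_norm] at t
        have h1 := Q_dist m (f x)
        have h2 := Q_dist k (f x)
        rw [norm_sub_rev] at h2
        calc ‖Q m (f x) - Q k (f x)‖ ≤ ‖Q m (f x) - f x‖ + ‖f x - Q k (f x)‖ := t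
          _ ≤ 2 / ((m : ℝ) + 1) + 2 / ((k : ℝ) + 1) := add_le_add h1 h2)
    refine le_trans hb ?_
    have e1 : 2 / ((m : ℝ) + 1) ≤ 2 / ((N : ℝ) + 1) := by
      gcongr
    have e2 : 2 / ((k : ℝ) + 1) ≤ 2 / ((N : ℝ) + 1) := by
      gcongr
    calc 2 / ((m : ℝ) + 1) + 2 / ((k : ℝ) + 1) ≤ 2 / ((N : ℝ) + 1) + 2 / ((N : ℝ) + 1) :=
          add_le_add e1 e2
      _ = 4 / ((N : ℝ) + 1) := by ring
  · exact tendsto_ceps 4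

noncomputable def m0 (f : lp (fun _ : X => ℂ) ∞) : ℂ := limUnder atTop (seq P f)

lemma tendsto_seq (f : lp (fun _ : X => ℂ) ∞) :
    Tendsto (seq P f) atTop (𝓝 (m0 P f)) := by
  obtain ⟨L, hL⟩ := cauchySeq_tendsto_of_complete (seq_cauchy P f)
  unfold m0
  rw [hL.limUnder_eq]
  exact hL

lemma tendsto_elInt_of_approx (f : lp (fun _ : X => ℂ) ∞) (w : ℕ → X → ℂ)
    (hwfin : ∀ n, (Set.range (w n)).Finite) (ε : ℕ → ℝ)
    (hε : Tendsto ε atTop (𝓝 0))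
    (hw : ∀ n x, ‖w n x - f x‖ ≤ ε n) :
    Tendsto (fun n => elInt P (w n)) atTop (𝓝 (m0 P f)) := by
  apply Filter.Tendsto.congr_dist (tendsto_seq P f)
  apply squeeze_zero (fun n => dist_nonneg)
    (g := fun n : ℕ => 2 / ((n : ℝ) + 1) + ε n)
  · intro n
    rw [dist_eq_norm]
    apply elInt_close P (seq_fin f n) (hwfin n)
    intro x
    have t := dist_triangle (Q n (f x)) (f x) (w n x)
    rw [dist_eq_norm, dist_eq_norm, dist_eq_norm] at t
    have h2 := hw n x
    rw [norm_sub_rev] at h2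
    calc ‖Q n (f x) - w n x‖ ≤ ‖Q n (f x) - f x‖ + ‖f x - w n x‖ := t
      _ ≤ 2 / ((n : ℝ) + 1) + ε n := add_le_add (Q_dist n (f x)) h2
  · simpa using (tendsto_ceps 2).add hε

/-- The state, as a linear functional. -/
noncomputable def mlin : lp (fun _ : X => ℂ) ∞ →ₗ[ℂ] ℂ where
  toFun := m0 P
  map_add' f g := by
    have h1 : Tendsto (fun n => elInt P ((fun x => Q n (f x)) + (fun x => Q n (g x))))
        atTop (𝓝 (m0 P (f + g))) := by
      apply tendsto_elInt_of_approx P (f + g) _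
        (fun n => range_add_finite (seq_fin f n) (seq_fin g n))
        (fun n => 4 / ((n : ℝ) + 1)) (tendsto_ceps 4)
      intro n x
      have hfg : (⇑(f + g) : ∀ _ : X, ℂ) x = f x + g x := by
        rw [lp.coeFn_add]
        rfl
      show ‖Q n (f x) + Q n (g x) - (f + g) x‖ ≤ _
      rw [hfg]
      have h1 := Q_dist n (f x)
      have h2 := Q_dist n (g x)
      calc ‖Q n (f x) + Q n (g x) - (f x + g x)‖
          = ‖(Q n (f x) - f x) + (Q n (g x) - g x)‖ := by ring_nf
        _ ≤ ‖Q n (f x) - f x‖ + ‖Q n (g x) - g x‖ := norm_add_le _ _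
        _ ≤ 2 / ((n : ℝ) + 1) + 2 / ((n : ℝ) + 1) := add_le_add h1 h2
        _ = 4 / ((n : ℝ) + 1) := by ring
    have h2 : Tendsto (fun n => elInt P ((fun x => Q n (f x)) + (fun x => Q n (g x))))
        atTop (𝓝 (m0 P f + m0 P g)) := by
      refine ((tendsto_seq P f).add (tendsto_seq P g)).congr fun n => ?_
      rw [elInt_add P (seq_fin f n) (seq_fin g n)]
      rfl
    exact tendsto_nhds_unique h1 h2
  map_smul' c f := by
    have h1 : Tendsto (fun n => elInt P (c • (fun x => Q n (f x))))
        atTop (𝓝 (m0 P (c • f))) := by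
      apply tendsto_elInt_of_approx P (c • f) _
        (fun n => range_smul_finite c (seq_fin f n))
        (fun n => ‖c‖ * (2 / ((n : ℝ) + 1)))
        (by simpa using (tendsto_ceps 2).const_mul ‖c‖)
      intro n x
      have hcf : (⇑(c • f) : ∀ _ : X, ℂ) x = c * f x := by
        rw [lp.coeFn_smul]
        rfl
      show ‖c * Q n (f x) - (c • f) x‖ ≤ _
      rw [hcf, ← mul_sub, norm_mul]
      exact mul_le_mul_of_nonneg_left (Q_dist n (f x)) (norm_nonneg c)
    have h2 : Tendsto (fun n => elInt P (c • (fun x => Q n (f x))))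
        atTop (𝓝 (c * m0 P f)) := by
      refine ((tendsto_seq P f).const_mul c).congr fun n => ?_
      rw [elInt_smul P c (seq_fin f n)]
      rfl
    simpa using tendsto_nhds_unique h1 h2

end Statement9Aux

open Statement9Aux in
/-- If `X` is `S`-domain measurable then there is a state `m` on `ℓ∞(X)` (a positive,
normalized linear functional on the bounded functions `lp (fun _ : X => ℂ) ∞`) such that
`m(s·f) = m(f·χ_{D_{s*s}})` for every `f ∈ ℓ∞(X)` and `s ∈ S`, where
`(s·f)(x) = f(α_{s*}(x))` for `x ∈ D_{ss*}` and `0` otherwise. -/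
theorem statement9 {S X : Type*} [Monoid S] [Star S] [IsInverseSemigroup S] [Countable S]
    (r : InverseSemigroupRep S X)
    (h : r.SDomainMeasurableSet (Set.univ : Set X)) :
    ∃ m : lp (fun _ : X => ℂ) ∞ →ₗ[ℂ] ℂ,
      (∀ f : lp (fun _ : X => ℂ) ∞,
        (∀ x : X, 0 ≤ (f x).re ∧ (f x).im = 0) → 0 ≤ (m f).re ∧ (m f).im = 0) ∧
      (∀ f : lp (fun _ : X => ℂ) ∞, (∀ x : X, f x = 1) → m f = 1) ∧
      ∀ (s : S) (f g h' : lp (fun _ : X => ℂ) ∞),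
        (∀ x : X, g x = ((r.α (star s)) x).elim 0 (fun y => f y)) →
        (∀ x : X, h' x = (r.dom s).indicator (fun y => f y) x) →
        m g = m h' := by
  obtain ⟨μ, ⟨hμ0, hμadd⟩, hμuniv, hμinv⟩ := h
  have hne : ∀ A : Set X, μ A ≠ ⊤ := by
    intro A
    have hle : μ A ≤ 1 := by
      have h2 := hμadd A Aᶜ disjoint_compl_right
      rw [Set.union_compl_self] at h2
      rw [← hμuniv, h2]
      exact le_self_add
    exact (lt_of_le_of_lt hle ENNReal.one_lt_top).ne
  set P : NiceMeasure X :=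
    { ν := fun A => (μ A).toReal
      empty := by simp [hμ0]
      addl := fun A B hAB => by
        show (μ (A ∪ B)).toReal = (μ A).toReal + (μ B).toReal
        rw [hμadd A B hAB, ENNReal.toReal_add (hne A) (hne B)]
      nonneg := fun A => ENNReal.toReal_nonneg
      univ := by simp [hμuniv] } with hP
  have hinv' : ∀ (s : S) (B : Set X), B ⊆ r.dom s → P.ν (r.im s B) = P.ν B := by
    intro s B hB
    show (μ (r.im s B)).toReal = (μ B).toReal
    rw [hμinv s B hB]
  refine ⟨mlin P, ?_, ?_, ?_⟩
  · intro f hf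
    constructor
    · apply ge_of_tendsto' ((Complex.continuous_re.tendsto _).comp (tendsto_seq P f))
      intro n
      exact elInt_re_nonneg P (seq_fin f n) (fun x => Q_re_nonneg n (hf x).1)
    · show (m0 P f).im = 0
      have h1 : Filter.Tendsto (fun n => (seq P f n).im) Filter.atTop
          (nhds ((m0 P f).im)) :=
        (Complex.continuous_im.tendsto _).comp (tendsto_seq P f)
      have h2 : (fun n => (seq P f n).im) = fun _ => (0 : ℝ) := by
        funext n
        exact elInt_im_zero P (seq_fin f n) (fun x => Q_im_zero n (hf x).2)
      rw [h2] at h1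
      exact tendsto_nhds_unique h1 tendsto_const_nhds
  · intro f hf
    show m0 P f = 1
    have h2 : seq P f = fun _ => (1 : ℂ) := by
      funext n
      show elInt P (fun x => Q n (f x)) = 1
      have he : (fun x => Q n (f x)) = fun _ : X => (1 : ℂ) := by
        funext x
        rw [hf x, Q_one]
      rw [he, elInt_one]
    have h1 := tendsto_seq P f
    rw [h2] at h1
    exact (tendsto_nhds_unique tendsto_const_nhds h1).symm
  · intro s f g h' hg hh
    have hglim := tendsto_elInt_of_approx P g
      (fun n x => ((r.α (star s)) x).elim 0 (fun y => Q n (f y)))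
      (fun n => range_elim_finite r s (seq_fin f n))
      (fun n => 2 / ((n : ℝ) + 1)) (tendsto_ceps 2)
      (by
        intro n x
        rw [hg x]
        cases hopt : (r.α (star s)) x with
        | none => simp [hopt]; positivity
        | some y =>
          simp only [hopt, Option.elim]
          exact Q_dist n (f y))
    have hhlim := tendsto_elInt_of_approx P h'
      (fun n x => (r.dom s).indicator (fun y => Q n (f y)) x)
      (fun n => range_indicator_finite r s (seq_fin f n))
      (fun n => 2 / ((n : ℝ) + 1)) (tendsto_ceps 2)
      (by
        intro n x
        rw [hh x]
        by_cases hx : x ∈ r.dom s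
        · simp only [Set.indicator_of_mem hx]
          exact Q_dist n (f x)
        · simp only [Set.indicator_of_notMem hx]
          simp
          positivity)
    have heq : ∀ n : ℕ, elInt P (fun x => ((r.α (star s)) x).elim 0 (fun y => Q n (f y)))
        = elInt P (fun x => (r.dom s).indicator (fun y => Q n (f y)) x) :=
      fun n => elInt_invariance r P hinv' s (seq_fin f n)
    have hhlim' := hhlim.congr (fun n => (heq n).symm)
    show m0 P g = m0 P h'
    exact tendsto_nhds_unique hglim hhlim'
end
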